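/- arXiv:1409.5175 — 4 statements merged into one kernel-verified Lean document; each statement's English description precedes it below -/
import Mathlib

section
/- Every finite simple graph G satisfies Δ(G) ≤ χ₁(G) ≤ Δ(G) + 1, where Δ(G) is the maximum vertex degree and χ₁(G) is the chromatic index (Vizing's theorem together with the trivial lower bound). -/
namespace Colorful

/-- A proper edge coloring of `G` with `k` colors: distinct edges sharing a
vertex receive distinct colors. -/
def ProperEdgeColoring {V : Type*} (G : SimpleGraph V) (k : ℕ)
    (f : Sym2 V → Fin k) : Prop :=
  ∀ e ∈ G.edgeSet, ∀ e' ∈ G.edgeSet, e ≠ e' → (∃ v, v ∈ e ∧ v ∈ e') → f e ≠ f e'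

/-- The chromatic index `χ₁(G)`: the least number of colors in a proper edge
coloring of `G`. -/
noncomputable def chromIndex {V : Type*} (G : SimpleGraph V) : ℕ :=
  sInf {k | ∃ f : Sym2 V → Fin k, ProperEdgeColoring G k f}


section machinery
open SimpleGraph

variable {V : Type*} [Fintype V] [DecidableEq V] {G : SimpleGraph V} {N : ℕ}

/-- properness of a partial edge coloring, in vertex-local form -/
def Proper (G : SimpleGraph V) (c : Sym2 V → Option (Fin N)) : Prop :=
  ∀ ⦃v w w' : V⦄, G.Adj v w → G.Adj v w' → w ≠ w' →
    ∀ a : Fin N, c s(v, w) = some a → c s(v, w') ≠ some a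

/-- color `a` is free at `v` -/
def Free (G : SimpleGraph V) (c : Sym2 V → Option (Fin N)) (v : V) (a : Fin N) : Prop :=
  ∀ w, G.Adj v w → c s(v, w) ≠ some a

lemma exists_free [DecidableRel G.Adj] {d : ℕ} (hd : ∀ v, G.degree v ≤ d)
    (c : Sym2 V → Option (Fin (d+1))) (v : V) : ∃ a, Free G c v a := by
  classical
  by_contra h
  push_neg at h
  have hsub : (Finset.univ.image (some : Fin (d+1) → Option (Fin (d+1)))) ⊆
      (G.neighborFinset v).image (fun w => c s(v, w)) := by
    intro o ho
    simp only [Finset.mem_image, Finset.mem_univ, true_and] at ho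
    obtain ⟨a, rfl⟩ := ho
    have ha := h a
    simp only [Free, not_forall, not_not] at ha
    obtain ⟨w, hw, hcw⟩ := ha
    exact Finset.mem_image.mpr ⟨w, by simpa [SimpleGraph.mem_neighborFinset] using hw, hcw⟩
  have h1 : d + 1 ≤ ((G.neighborFinset v).image (fun w => c s(v, w))).card := by
    have := Finset.card_le_card hsub
    rwa [Finset.card_image_of_injective _ (Option.some_injective _), Finset.card_univ,
      Fintype.card_fin] at this
  have h2 : ((G.neighborFinset v).image (fun w => c s(v, w))).card ≤ d :=
    le_trans (Finset.card_image_le) ((G.card_neighborFinset_eq_degree v) ▸ hd v)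
  omega

/-- the α/β subgraph -/
def sg (G : SimpleGraph V) (c : Sym2 V → Option (Fin N)) (α β : Fin N) : SimpleGraph V where
  Adj u v := G.Adj u v ∧ (c s(u, v) = some α ∨ c s(u, v) = some β)
  symm := ⟨by
    intro u v ⟨h1, h2⟩
    exact ⟨h1.symm, by rwa [Sym2.eq_swap]⟩⟩
  loopless := ⟨fun v h => G.irrefl h.1⟩

/-- swap of colors on options -/
def osw (α β : Fin N) : Option (Fin N) → Option (Fin N) := fun o =>
  if o = some α then some β else if o = some β then some α else o

lemma osw_osw (α β : Fin N) (o : Option (Fin N)) : osw α β (osw α β o) = o := by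
  unfold osw
  by_cases h1 : o = some α <;> by_cases h2 : o = some β <;>
    simp [h1, h2] <;> split_ifs <;> simp_all

lemma osw_inj (α β : Fin N) : Function.Injective (osw α β) :=
  Function.LeftInverse.injective (osw_osw α β)

lemma osw_none_iff (α β : Fin N) (o : Option (Fin N)) : osw α β o = none ↔ o = none := by
  unfold osw
  split_ifs with h1 h2 <;> simp_all

lemma osw_of_ne (α β : Fin N) {o : Option (Fin N)} (h1 : o ≠ some α) (h2 : o ≠ some β) :
    osw α β o = o := by simp [osw, h1, h2]

open scoped Classical in
/-- swap the colors α, β on the α/β-component of x -/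
noncomputable def swapc (G : SimpleGraph V) (c : Sym2 V → Option (Fin N)) (α β : Fin N)
    (x : V) : Sym2 V → Option (Fin N) := fun e =>
  if ∃ v ∈ e, (sg G c α β).Reachable x v then osw α β (c e) else c e

lemma swapc_of_reachable {c : Sym2 V → Option (Fin N)} {α β : Fin N} {x v : V}
    (h : (sg G c α β).Reachable x v) (w : V) :
    swapc G c α β x s(v, w) = osw α β (c s(v, w)) := by
  unfold swapc
  rw [if_pos ⟨v, Sym2.mem_mk_left v w, h⟩]

lemma swapc_of_not_reachable {c : Sym2 V → Option (Fin N)} {α β : Fin N} {x v : V}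
    (h : ¬ (sg G c α β).Reachable x v) {w : V} (hadj : G.Adj v w) :
    swapc G c α β x s(v, w) = c s(v, w) := by
  unfold swapc
  by_cases hab : c s(v, w) = some α ∨ c s(v, w) = some β
  · rw [if_neg]
    rintro ⟨z, hz, hr⟩
    rw [Sym2.mem_iff] at hz
    rcases hz with rfl | rfl
    · exact h hr
    · exact h (hr.trans (SimpleGraph.Adj.reachable (by exact ⟨hadj.symm, by rwa [Sym2.eq_swap]⟩ : (sg G c α β).Adj z v)))
  · split_ifs with h'
    · exact osw_of_ne α β (fun h => hab (Or.inl h)) (fun h => hab (Or.inr h))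
    · rfl

lemma swapc_proper {c : Sym2 V → Option (Fin N)} {α β : Fin N} {x : V}
    (hc : Proper G c) : Proper G (swapc G c α β x) := by
  intro v w w' hvw hvw' hne a h1 h2
  by_cases hr : (sg G c α β).Reachable x v
  · rw [swapc_of_reachable hr] at h1 h2
    have := osw_inj α β (h1.trans h2.symm)
    rcases hcc : c s(v, w) with _ | b
    · rw [hcc] at h1; simp only [osw] at h1; split_ifs at h1 <;> simp_all
    · exact hc hvw hvw' hne b hcc (this ▸ hcc)
  · rw [swapc_of_not_reachable hr hvw] at h1
    rw [swapc_of_not_reachable hr hvw'] at h2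
    exact hc hvw hvw' hne a h1 h2

lemma swapc_none_iff {c : Sym2 V → Option (Fin N)} {α β : Fin N} {x : V} (e : Sym2 V) :
    swapc G c α β x e = none ↔ c e = none := by
  unfold swapc
  split_ifs with h
  · exact osw_none_iff α β _
  · rfl


/-- swap on colors -/
def fsw (α β a : Fin N) : Fin N := if a = α then β else if a = β then α else a

lemma fsw_fsw (α β a : Fin N) : fsw α β (fsw α β a) = a := by
  unfold fsw
  by_cases h1 : a = α <;> by_cases h2 : a = β <;>
    simp [h1, h2] <;> split_ifs <;> simp_all

lemma osw_some (α β a : Fin N) : osw α β (some a) = some (fsw α β a) := by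
  unfold osw fsw
  by_cases h1 : a = α <;> by_cases h2 : a = β <;> simp [h1, h2] <;> split_ifs <;> simp_all

lemma osw_eq_some_iff {α β a : Fin N} {o : Option (Fin N)} :
    osw α β o = some a ↔ o = some (fsw α β a) := by
  constructor
  · intro h
    have := congrArg (osw α β) h
    rwa [osw_osw, osw_some] at this
  · intro h
    rw [h, osw_some, fsw_fsw]

lemma free_swapc_of_reachable {c : Sym2 V → Option (Fin N)} {α β : Fin N} {x v : V}
    (hr : (sg G c α β).Reachable x v) {a : Fin N} (h : Free G c v (fsw α β a)) :
    Free G (swapc G c α β x) v a := by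
  intro w hw hcw
  rw [swapc_of_reachable hr, osw_eq_some_iff] at hcw
  exact h w hw hcw

lemma free_swapc_of_not_reachable {c : Sym2 V → Option (Fin N)} {α β : Fin N} {x v : V}
    (hr : ¬ (sg G c α β).Reachable x v) {a : Fin N} (h : Free G c v a) :
    Free G (swapc G c α β x) v a := by
  intro w hw hcw
  rw [swapc_of_not_reachable hr hw] at hcw
  exact h w hw hcw

lemma free_swapc_of_ne {c : Sym2 V → Option (Fin N)} {α β : Fin N} {x v : V}
    {a : Fin N} (ha : a ≠ α) (hb : a ≠ β) (h : Free G c v a) :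
    Free G (swapc G c α β x) v a := by
  intro w hw hcw
  by_cases hr : (sg G c α β).Reachable x v
  · rw [swapc_of_reachable hr, osw_eq_some_iff] at hcw
    exact h w hw (by rwa [fsw, if_neg ha, if_neg hb] at hcw)
  · rw [swapc_of_not_reachable hr hw] at hcw
    exact h w hw hcw

/-- existence of a distance-decreasing neighbor -/
lemma exists_pred (H : SimpleGraph V) {x v : V} (hr : H.Reachable x v) (hne : v ≠ x) :
    ∃ u, H.Adj u v ∧ H.dist x u + 1 = H.dist x v := by
  obtain ⟨p, hp⟩ := hr.exists_walk_length_eq_dist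
  have hd0 : H.dist x v ≠ 0 := by
    intro h
    rcases SimpleGraph.dist_eq_zero_iff_eq_or_not_reachable.mp h with h' | h'
    · exact hne h'.symm
    · exact h' hr
  have hnn : ¬ p.reverse.Nil := by
    rw [SimpleGraph.Walk.nil_iff_length_eq, SimpleGraph.Walk.length_reverse, hp]
    exact hd0
  obtain ⟨u, hadj, q, hq⟩ := SimpleGraph.Walk.not_nil_iff.mp hnn
  refine ⟨u, hadj.symm, ?_⟩
  have hlq : q.length = H.dist x v - 1 := by
    have := congrArg SimpleGraph.Walk.length hq
    rw [SimpleGraph.Walk.length_reverse, hp] at this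
    simp only [SimpleGraph.Walk.length_cons] at this
    omega
  have h1 : H.dist x u ≤ H.dist x v - 1 := by
    have := SimpleGraph.dist_le q.reverse
    rwa [SimpleGraph.Walk.length_reverse, hlq] at this
  have h2 : H.dist x v ≤ H.dist x u + 1 := by
    obtain ⟨r, hrl⟩ := (hr.trans hadj.symm.reachable.symm).exists_walk_length_eq_dist
    have := SimpleGraph.dist_le (r.concat hadj.symm)
    rwa [SimpleGraph.Walk.length_concat, hrl] at this
  omega

open scoped Classical in
/-- a connected graph with max degree 2 cannot have three distinct vertices of degree ≤ 1 -/
lemma three_endpoints (H : SimpleGraph V)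
    (hdeg : ∀ v, ∀ w₁ w₂ w₃, H.Adj v w₁ → H.Adj v w₂ → H.Adj v w₃ →
      w₁ = w₂ ∨ w₁ = w₃ ∨ w₂ = w₃)
    {x u w : V}
    (hx : ∀ w₁ w₂, H.Adj x w₁ → H.Adj x w₂ → w₁ = w₂)
    (hu : ∀ w₁ w₂, H.Adj u w₁ → H.Adj u w₂ → w₁ = w₂)
    (hw : ∀ w₁ w₂, H.Adj w w₁ → H.Adj w w₂ → w₁ = w₂)
    (hxu : x ≠ u) (hxw : x ≠ w) (huw : u ≠ w)
    (hru : H.Reachable x u) (hrw : H.Reachable x w) : False := by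
  -- restrict to the component of x
  set H' : SimpleGraph V :=
    { Adj := fun a b => H.Adj a b ∧ H.Reachable x a ∧ H.Reachable x b
      symm := ⟨by rintro a b ⟨h1, h2, h3⟩; exact ⟨h1.symm, h3, h2⟩⟩
      loopless := ⟨fun a h => H.irrefl h.1⟩ } with hH'
  letI : DecidableRel H'.Adj := fun a b => Classical.dec _
  have hreach : ∀ {a b : V}, H.Reachable x a → (p : H.Walk a b) → H'.Reachable a b := by
    intro a b ha p
    induction p with
    | nil => exact SimpleGraph.Reachable.refl _
    | @cons a' b' c' h q ih =>
      have hb' : H.Reachable x b' := ha.trans h.reachable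
      exact (SimpleGraph.Adj.reachable (by exact ⟨h, ha, hb'⟩)).trans (ih hb')
  have hreach' : ∀ {a : V}, H.Reachable x a → H'.Reachable x a := by
    intro a ha
    obtain ⟨p⟩ := ha
    exact hreach (SimpleGraph.Reachable.refl x) p
  set K : Finset V := Finset.univ.filter (fun v => H.Reachable x v) with hK
  -- degree bounds for H'
  have hdeg2 : ∀ v, H'.degree v ≤ 2 := by
    intro v
    by_contra hcon
    push_neg at hcon
    obtain ⟨s, hs, hscard⟩ := Finset.exists_subset_card_eq (show 3 ≤ _ from hcon)
    rw [Finset.card_eq_three] at hscard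
    obtain ⟨a, b, c, hab, hac, hbc, rfl⟩ := hscard
    have ha := (SimpleGraph.mem_neighborFinset _ _ _).mp (hs (show a ∈ ({a,b,c} : Finset V) by simp))
    have hb := (SimpleGraph.mem_neighborFinset _ _ _).mp (hs (show b ∈ ({a,b,c} : Finset V) by simp))
    have hc := (SimpleGraph.mem_neighborFinset _ _ _).mp (hs (show c ∈ ({a,b,c} : Finset V) by simp))
    rcases hdeg v a b c ha.1 hb.1 hc.1 with h | h | h <;> simp_all
  have hdeg1 : ∀ v, (∀ w₁ w₂, H.Adj v w₁ → H.Adj v w₂ → w₁ = w₂) → H'.degree v ≤ 1 := by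
    intro v hv
    rw [SimpleGraph.degree, Finset.card_le_one]
    intro a ha b hb
    rw [SimpleGraph.mem_neighborFinset] at ha hb
    exact hv a b ha.1 hb.1
  have hdeg0 : ∀ v, v ∉ K → H'.degree v = 0 := by
    intro v hv
    rw [SimpleGraph.degree, Finset.card_eq_zero, Finset.eq_empty_iff_forall_notMem]
    intro a ha
    rw [SimpleGraph.mem_neighborFinset] at ha
    exact hv (by simp [hK, ha.2.1])
  -- lower bound on edges: injection from K.erase x
  have hmem : ∀ v ∈ K.erase x, H'.Reachable x v ∧ v ≠ x := by
    intro v hv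
    rw [Finset.mem_erase] at hv
    exact ⟨hreach' (by simpa [hK] using hv.2), hv.1⟩
  have hedge : (K.erase x).card ≤ H'.edgeFinset.card := by
    have key : ∀ v ∈ K.erase x, ∃ u', H'.Adj u' v ∧ H'.dist x u' + 1 = H'.dist x v :=
      fun v hv => exists_pred H' (hmem v hv).1 (hmem v hv).2
    choose f hf1 hf2 using key
    apply Finset.card_le_card_of_injOn (fun v => if hv : v ∈ K.erase x then s(f v hv, v) else s(v,v))
    · intro v hv
      simp only [Finset.mem_coe] at hv ⊢
      rw [dif_pos hv, SimpleGraph.mem_edgeFinset, SimpleGraph.mem_edgeSet]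
      exact hf1 v hv
    · intro a ha b hb hfab
      simp only [Finset.mem_coe] at ha hb
      simp only [dif_pos ha, dif_pos hb, Sym2.eq_iff] at hfab
      rcases hfab with ⟨h1, h2⟩ | ⟨h1, h2⟩
      · exact h2
      · exfalso
        have e1 := hf2 a ha
        have e2 := hf2 b hb
        rw [h1] at e1
        rw [← h2] at e2
        omega
  -- upper bound via degree sum
  have hsum := H'.sum_degrees_eq_twice_card_edges
  have hxK : x ∈ K := Finset.mem_filter.mpr ⟨Finset.mem_univ x, SimpleGraph.Reachable.refl x⟩
  have huK : u ∈ K := by simp [hK, hru]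
  have hwK : w ∈ K := by simp [hK, hrw]
  have hSsub : {x, u, w} ⊆ K := by
    intro a ha
    simp only [Finset.mem_insert, Finset.mem_singleton] at ha
    rcases ha with rfl | rfl | rfl <;> assumption
  have hScard : ({x, u, w} : Finset V).card = 3 := by
    rw [Finset.card_insert_of_notMem (by simp [hxu, hxw]),
      Finset.card_insert_of_notMem (by simp [huw]), Finset.card_singleton]
  have hsum_univ : ∑ v : V, H'.degree v = ∑ v ∈ K, H'.degree v := by
    rw [← Finset.sum_subset (Finset.subset_univ K)]
    intro v _ hv
    exact hdeg0 v hv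
  have hsplit : ∑ v ∈ K, H'.degree v = ∑ v ∈ K \ {x, u, w}, H'.degree v
      + ∑ v ∈ ({x, u, w} : Finset V), H'.degree v := Finset.sum_sdiff hSsub |>.symm
  have hb1 : ∑ v ∈ ({x, u, w} : Finset V), H'.degree v ≤ 3 := by
    calc ∑ v ∈ ({x, u, w} : Finset V), H'.degree v ≤ ({x, u, w} : Finset V).card * 1 := by
          apply Finset.sum_le_card_nsmul
          intro v hv
          simp only [Finset.mem_insert, Finset.mem_singleton] at hv
          rcases hv with rfl | rfl | rfl
          · exact hdeg1 v hx
          · exact hdeg1 v hu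
          · exact hdeg1 v hw
      _ = 3 := by rw [hScard]
  have hb2 : ∑ v ∈ K \ {x, u, w}, H'.degree v ≤ (K.card - 3) * 2 := by
    have := Finset.sum_le_card_nsmul (K \ {x, u, w}) (fun v => H'.degree v) 2
      (fun v _ => hdeg2 v)
    rwa [Finset.card_sdiff_of_subset hSsub, hScard] at this
  have hK3 : 3 ≤ K.card := hScard ▸ Finset.card_le_card hSsub
  have hKx : (K.erase x).card = K.card - 1 := Finset.card_erase_of_mem hxK
  omega


/-- a Vizing fan at `x` -/
structure IsFan (G : SimpleGraph V) (c : Sym2 V → Option (Fin N)) (x : V) (k : ℕ)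
    (y : ℕ → V) : Prop where
  adj : ∀ i, i ≤ k → G.Adj x (y i)
  inj : ∀ i, i ≤ k → ∀ j, j ≤ k → y i = y j → i = j
  h0 : c s(x, y 0) = none
  hcol : ∀ i, i < k → c s(x, y (i+1)) ≠ none
  hfree : ∀ i, i < k → ∀ a, c s(x, y (i+1)) = some a → Free G c (y i) a

lemma IsFan.mono {c : Sym2 V → Option (Fin N)} {x : V} {k m : ℕ} {y : ℕ → V}
    (h : IsFan G c x k y) (hm : m ≤ k) : IsFan G c x m y where
  adj i hi := h.adj i (hi.trans hm)
  inj i hi j hj := h.inj i (hi.trans hm) j (hj.trans hm)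
  h0 := h.h0
  hcol i hi := h.hcol i (lt_of_lt_of_le hi hm)
  hfree i hi := h.hfree i (lt_of_lt_of_le hi hm)

lemma IsFan.edge_inj {c : Sym2 V → Option (Fin N)} {x : V} {k : ℕ} {y : ℕ → V}
    (h : IsFan G c x k y) {i j : ℕ} (hi : i ≤ k) (hj : j ≤ k)
    (he : s(x, y i) = s(x, y j)) : i = j :=
  h.inj i hi j hj (Sym2.congr_right.mp he)

lemma exists_maximal_fan (c : Sym2 V → Option (Fin N)) {x y₀ : V}
    (hadj : G.Adj x y₀) (h0 : c s(x, y₀) = none) :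
    ∃ k y, y 0 = y₀ ∧ IsFan G c x k y ∧
      ∀ z a, G.Adj x z → c s(x, z) = some a → Free G c (y k) a → ∃ j, j ≤ k ∧ z = y j := by
  have ext : ∀ k y, IsFan G c x k y →
      (¬ ∀ z a, G.Adj x z → c s(x, z) = some a → Free G c (y k) a → ∃ j, j ≤ k ∧ z = y j) →
      ∃ y', y' 0 = y 0 ∧ IsFan G c x (k+1) y' := by
    intro k y hfan hmax
    push_neg at hmax
    obtain ⟨z, a, hz, hca, hfr, hzy⟩ := hmax
    set y' : ℕ → V := fun i => if i ≤ k then y i else z with hy'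
    have hy'le : ∀ i, i ≤ k → y' i = y i := fun i hi => by simp [hy', hi]
    have hy'k : y' (k+1) = z := by simp [hy']
    refine ⟨y', hy'le 0 (by omega), ?_, ?_, ?_, ?_, ?_⟩
    · intro i hi
      rcases Nat.lt_or_ge i (k+1) with h | h
      · rw [hy'le i (by omega)]; exact hfan.adj i (by omega)
      · have : i = k+1 := by omega
        rw [this, hy'k]; exact hz
    · intro i hi j hj hij
      rcases Nat.lt_or_ge i (k+1) with h | h <;> rcases Nat.lt_or_ge j (k+1) with h' | h'
      · rw [hy'le i (by omega), hy'le j (by omega)] at hij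
        exact hfan.inj i (by omega) j (by omega) hij
      · have hj' : j = k+1 := by omega
        rw [hy'le i (by omega), hj', hy'k] at hij
        exact absurd hij.symm (hzy i (by omega))
      · have hi' : i = k+1 := by omega
        rw [hi', hy'k, hy'le j (by omega)] at hij
        exact absurd hij (hzy j (by omega))
      · omega
    · rw [hy'le 0 (by omega)]; exact hfan.h0
    · intro i hi
      rcases Nat.lt_or_ge i k with h | h
      · rw [hy'le (i+1) (by omega)]; exact hfan.hcol i h
      · have : i = k := by omega
        rw [this, hy'k, hca]; simp
    · intro i hi b hb
      rcases Nat.lt_or_ge i k with h | h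
      · rw [hy'le (i+1) (by omega)] at hb
        have := hfan.hfree i h b hb
        intro w hw
        rw [hy'le i (by omega)]
        exact this w (by rwa [hy'le i (by omega)] at hw)
      · have hik : i = k := by omega
        rw [hik, hy'k, hca] at hb
        obtain rfl : a = b := by injection hb
        intro w hw
        rw [hik, hy'le k (by omega)]
        exact hfr w (by rwa [hik, hy'le k (by omega)] at hw)
  have cardbd : ∀ k y, IsFan G c x k y → k + 1 ≤ Fintype.card V := by
    intro k y hfan
    have hinj : Function.Injective (fun i : Fin (k+1) => y i) := by
      intro i j hij
      exact Fin.ext (hfan.inj i (by omega) j (by omega) hij)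
    have := Fintype.card_le_of_injective _ hinj
    simpa using this
  suffices H : ∀ n k y, y 0 = y₀ → IsFan G c x k y → Fintype.card V ≤ k + 1 + n →
      ∃ k' y', y' 0 = y₀ ∧ IsFan G c x k' y' ∧
        ∀ z a, G.Adj x z → c s(x, z) = some a → Free G c (y' k') a → ∃ j, j ≤ k' ∧ z = y' j by
    refine H (Fintype.card V) 0 (fun _ => y₀) rfl ?_ (by omega)
    exact ⟨fun i hi => by simpa using hadj, fun i hi j hj _ => by omega,
      by simpa using h0, fun i hi => by omega, fun i hi => by omega⟩
  intro n
  induction n with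
  | zero =>
    intro k y hy0 hfan hcard
    by_cases hmax : ∀ z a, G.Adj x z → c s(x, z) = some a → Free G c (y k) a →
        ∃ j, j ≤ k ∧ z = y j
    · exact ⟨k, y, hy0, hfan, hmax⟩
    · obtain ⟨y', hy'0, hfan'⟩ := ext k y hfan hmax
      have := cardbd (k+1) y' hfan'
      omega
  | succ n ih =>
    intro k y hy0 hfan hcard
    by_cases hmax : ∀ z a, G.Adj x z → c s(x, z) = some a → Free G c (y k) a →
        ∃ j, j ≤ k ∧ z = y j
    · exact ⟨k, y, hy0, hfan, hmax⟩
    · obtain ⟨y', hy'0, hfan'⟩ := ext k y hfan hmax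
      exact ih (k+1) y' (hy'0.trans hy0) hfan' (by omega)

open scoped Classical in
/-- shift the fan: edge `x yᵢ` (i < m) gets the old color of `x yᵢ₊₁`,
and `x y_m` becomes uncolored. -/
noncomputable def shiftc (c : Sym2 V → Option (Fin N)) (x : V) (y : ℕ → V) (m : ℕ) :
    Sym2 V → Option (Fin N) := fun e =>
  if h : ∃ i, i < m ∧ e = s(x, y i) then c s(x, y (h.choose + 1))
  else if e = s(x, y m) then none else c e

variable {c : Sym2 V → Option (Fin N)} {x : V} {k m : ℕ} {y : ℕ → V}

lemma shift_eval_lt (hfan : IsFan G c x k y) (hm : m ≤ k) {i : ℕ} (hi : i < m) :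
    shiftc c x y m s(x, y i) = c s(x, y (i+1)) := by
  have h : ∃ t, t < m ∧ s(x, y i) = s(x, y t) := ⟨i, hi, rfl⟩
  rw [shiftc, dif_pos h]
  obtain ⟨ht, he⟩ := h.choose_spec
  rw [hfan.edge_inj (by omega) (by omega) he.symm]

lemma shift_eval_m (hfan : IsFan G c x k y) (hm : m ≤ k) :
    shiftc c x y m s(x, y m) = none := by
  rw [shiftc, dif_neg, if_pos rfl]
  rintro ⟨t, ht, he⟩
  have := hfan.edge_inj (show m ≤ k by omega) (by omega) he
  omega

lemma shift_eval_other {e : Sym2 V} (he : ∀ i, i ≤ m → e ≠ s(x, y i)) :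
    shiftc c x y m e = c e := by
  rw [shiftc, dif_neg, if_neg (he m le_rfl)]
  rintro ⟨t, ht, hte⟩
  exact he t (by omega) hte


set_option maxHeartbeats 1000000 in
/-- shift the fan up to `m` and color `x y_m` with `β`. -/
lemma fill (hc : Proper G c) (hfan : IsFan G c x k y) (hm : m ≤ k) {β : Fin N}
    (hβx : Free G c x β) (hβm : Free G c (y m) β) :
    ∃ c' : Sym2 V → Option (Fin N),
      Proper G c' ∧ c' s(x, y 0) ≠ none ∧ ∀ e, c e ≠ none → c' e ≠ none := by
  classical
  set c' : Sym2 V → Option (Fin N) :=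
    Function.update (shiftc c x y m) s(x, y m) (some β) with hc'
  have hval : ∀ v w, G.Adj v w → ∀ a, c' s(v, w) = some a →
      (v = x ∧ ∃ i, i < m ∧ w = y i ∧ c s(x, y (i+1)) = some a) ∨
      (v = x ∧ w = y m ∧ a = β) ∨
      (w = x ∧ ∃ i, i < m ∧ v = y i ∧ c s(x, y (i+1)) = some a) ∨
      (w = x ∧ v = y m ∧ a = β) ∨
      ((∀ i, i ≤ m → s(v, w) ≠ s(x, y i)) ∧ c s(v, w) = some a) := by
    intro v w hvw a ha
    by_cases h1 : s(v, w) = s(x, y m)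
    · rw [hc', h1, Function.update_self] at ha
      obtain rfl : β = a := by injection ha
      rcases Sym2.eq_iff.mp h1 with ⟨rfl, rfl⟩ | ⟨rfl, rfl⟩
      · exact Or.inr (Or.inl ⟨rfl, rfl, rfl⟩)
      · exact Or.inr (Or.inr (Or.inr (Or.inl ⟨rfl, rfl, rfl⟩)))
    · rw [hc', Function.update_of_ne h1] at ha
      by_cases h2 : ∃ i, i < m ∧ s(v, w) = s(x, y i)
      · obtain ⟨i, hi, hei⟩ := h2
        rw [hei, shift_eval_lt hfan hm hi] at ha
        rcases Sym2.eq_iff.mp hei with ⟨rfl, rfl⟩ | ⟨rfl, rfl⟩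
        · exact Or.inl ⟨rfl, i, hi, rfl, ha⟩
        · exact Or.inr (Or.inr (Or.inl ⟨rfl, i, hi, rfl, ha⟩))
      · push_neg at h2
        have hother : ∀ i, i ≤ m → s(v, w) ≠ s(x, y i) := by
          intro i hi
          rcases Nat.lt_or_ge i m with h | h
          · exact h2 i h
          · have : i = m := by omega
            rw [this]; exact h1
        rw [shift_eval_other hother] at ha
        exact Or.inr (Or.inr (Or.inr (Or.inr ⟨hother, ha⟩)))
  have hproper : Proper G c' := by
    intro v w w' hvw hvw' hne a ha ha'
    by_cases hv : v = x
    · subst v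
      by_cases hab : a = β
      · subst a
        have key : ∀ w₁, G.Adj x w₁ → c' s(x, w₁) = some β → w₁ ≠ y m → False := by
          intro w₁ hw₁ h₁ hne₁
          rcases hval x w₁ hw₁ β h₁ with ⟨_, i, hi, rfl, hcc⟩ | ⟨_, h, _⟩ |
              ⟨hx1, _⟩ | ⟨hx1, _⟩ | ⟨hoth, hcc⟩
          · exact hβx (y (i+1)) (hfan.adj (i+1) (by omega)) hcc
          · exact hne₁ h
          · exact (G.ne_of_adj hw₁).symm hx1
          · exact (G.ne_of_adj hw₁).symm hx1
          · exact hβx w₁ hw₁ hcc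
        by_cases hwm : w = y m
        · exact key w' hvw' ha' (fun h => hne (hwm.trans h.symm))
        · exact key w hvw ha hwm
      · have trace : ∀ w₁, G.Adj x w₁ → c' s(x, w₁) = some a →
            ∃ uA, G.Adj x uA ∧ c s(x, uA) = some a ∧
              ((w₁ = uA ∧ ∀ i, i ≤ m → w₁ ≠ y i) ∨
               (∃ i, i < m ∧ w₁ = y i ∧ uA = y (i+1))) := by
          intro w₁ hw₁ h₁
          rcases hval x w₁ hw₁ a h₁ with ⟨_, i, hi, rfl, hcc⟩ | ⟨_, _, h⟩ |
              ⟨hx1, _⟩ | ⟨hx1, _⟩ | ⟨hoth, hcc⟩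
          · exact ⟨y (i+1), hfan.adj (i+1) (by omega), hcc, Or.inr ⟨i, hi, rfl, rfl⟩⟩
          · exact absurd h hab
          · exact absurd hx1 (G.ne_of_adj hw₁).symm
          · exact absurd hx1 (G.ne_of_adj hw₁).symm
          · exact ⟨w₁, hw₁, hcc, Or.inl ⟨rfl, fun i hi hh => hoth i hi (by rw [hh])⟩⟩
        obtain ⟨uA, huA, hcuA, hrel⟩ := trace w hvw ha
        obtain ⟨uB, huB, hcuB, hrel'⟩ := trace w' hvw' ha'
        have hww : uA = uB := by
          by_contra hcon
          exact hc huA huB hcon a hcuA hcuB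
        rcases hrel with ⟨rfl, hnid⟩ | ⟨i, hi, hwi, huAe⟩ <;>
          rcases hrel' with ⟨rfl, hnid'⟩ | ⟨i', hi', hwi', huBe⟩
        · exact hne hww
        · exact hnid (i'+1) (by omega) (hww.trans huBe)
        · exact hnid' (i+1) (by omega) (hww.symm.trans huAe)
        · have : i + 1 = i' + 1 := by
            apply hfan.inj (i+1) (by omega) (i'+1) (by omega)
            rw [← huAe, ← huBe, hww]
          have : i = i' := by omega
          exact hne (by rw [hwi, hwi', this])
    · have analyze : ∀ w₁, G.Adj v w₁ → c' s(v, w₁) = some a →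
          (w₁ = x ∧ Free G c v a) ∨ c s(v, w₁) = some a := by
        intro w₁ h₁ ha₁
        rcases hval v w₁ h₁ a ha₁ with ⟨hvx, _⟩ | ⟨hvx, _⟩ | ⟨hwx, i, hi, hvy, hcc⟩ |
            ⟨hwx, hvy, hab⟩ | ⟨_, hcc⟩
        · exact absurd hvx hv
        · exact absurd hvx hv
        · refine Or.inl ⟨hwx, ?_⟩
          rw [hvy]
          exact hfan.hfree i (by omega) a hcc
        · refine Or.inl ⟨hwx, ?_⟩
          rw [hvy, hab]
          exact hβm
        · exact Or.inr hcc
      rcases analyze w hvw ha with ⟨hwx, hfr⟩ | hcc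
      · rcases analyze w' hvw' ha' with ⟨hwx', _⟩ | hcc'
        · exact hne (hwx.trans hwx'.symm)
        · exact hfr w' hvw' hcc'
      · rcases analyze w' hvw' ha' with ⟨hwx', hfr'⟩ | hcc'
        · exact hfr' w hvw hcc
        · exact hc hvw hvw' hne a hcc hcc'
  refine ⟨c', hproper, ?_, ?_⟩
  · rcases Nat.eq_zero_or_pos m with rfl | hm0
    · rw [hc', Function.update_self]
      simp
    · have hne0 : s(x, y 0) ≠ s(x, y m) := by
        intro h
        have := hfan.edge_inj (by omega) hm h
        omega
      rw [hc', Function.update_of_ne hne0, shift_eval_lt hfan hm hm0]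
      exact hfan.hcol 0 (by omega)
  · intro e he
    by_cases h1 : e = s(x, y m)
    · rw [hc', h1, Function.update_self]; simp
    · rw [hc', Function.update_of_ne h1]
      by_cases h2 : ∃ i, i < m ∧ e = s(x, y i)
      · obtain ⟨i, hi, rfl⟩ := h2
        rw [shift_eval_lt hfan hm hi]
        exact hfan.hcol i (by omega)
      · push_neg at h2
        have hother : ∀ i, i ≤ m → e ≠ s(x, y i) := by
          intro i hi
          rcases Nat.lt_or_ge i m with h | h
          · exact h2 i h
          · have : i = m := by omega
            rw [this]; exact h1
        rw [shift_eval_other hother]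
        exact he


set_option maxHeartbeats 1000000 in
/-- Vizing's extension lemma: an uncolored edge can be colored, keeping all
previously colored edges colored. -/
lemma extend {d : ℕ} [DecidableRel G.Adj] (hd : ∀ v, G.degree v ≤ d)
    {c : Sym2 V → Option (Fin (d+1))} (hc : Proper G c) {x y₀ : V}
    (hadj : G.Adj x y₀) (hnone : c s(x, y₀) = none) :
    ∃ c' : Sym2 V → Option (Fin (d+1)),
      Proper G c' ∧ c' s(x, y₀) ≠ none ∧ ∀ e, c e ≠ none → c' e ≠ none := by
  obtain ⟨k, y, hy0, hfan, hmax⟩ := exists_maximal_fan c hadj hnone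
  subst hy0
  obtain ⟨β, hβ⟩ := exists_free hd c (y k)
  by_cases hβx : Free G c x β
  · exact fill hc hfan le_rfl hβx hβ
  · obtain ⟨α, hα⟩ := exists_free hd c x
    rw [Free] at hβx
    push_neg at hβx
    obtain ⟨z, hz, hcz⟩ := hβx
    obtain ⟨j, hj, rfl⟩ := hmax z β hz hcz hβ
    have hj0 : j ≠ 0 := by
      rintro rfl
      rw [hfan.h0] at hcz
      exact absurd hcz (by simp)
    have hjk : j ≠ k := by
      intro h
      refine hβ x (hfan.adj k le_rfl).symm ?_
      rw [Sym2.eq_swap, ← h]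
      exact hcz
    obtain ⟨t, rfl⟩ : ∃ t, j = t + 1 := ⟨j - 1, by omega⟩
    have htk : t < k := by omega
    have hfree_t : Free G c (y t) β := hfan.hfree t htk β hcz
    have hαβ : α ≠ β := by
      rintro rfl
      exact hα (y (t+1)) hz hcz
    -- uniqueness of colors at a vertex
    have hsame : ∀ v w₁ w₂, G.Adj v w₁ → G.Adj v w₂ → c s(v, w₁) = c s(v, w₂) →
        c s(v, w₁) ≠ none → w₁ = w₂ := by
      intro v w₁ w₂ h₁ h₂ heq hn
      by_contra hne
      obtain ⟨a, ha⟩ := Option.ne_none_iff_exists'.mp hn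
      exact hc h₁ h₂ hne a ha (heq ▸ ha)
    set H : SimpleGraph V := sg G c α β with hH
    have hadjH : ∀ {v w : V}, H.Adj v w →
        G.Adj v w ∧ (c s(v, w) = some α ∨ c s(v, w) = some β) := fun h => h
    -- H has max degree 2
    have hH2 : ∀ v w₁ w₂ w₃, H.Adj v w₁ → H.Adj v w₂ → H.Adj v w₃ →
        w₁ = w₂ ∨ w₁ = w₃ ∨ w₂ = w₃ := by
      intro v w₁ w₂ w₃ h₁ h₂ h₃
      have hcol : c s(v, w₁) = c s(v, w₂) ∨ c s(v, w₁) = c s(v, w₃) ∨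
          c s(v, w₂) = c s(v, w₃) := by
        rcases h₁.2 with h | h <;> rcases h₂.2 with h' | h' <;>
          rcases h₃.2 with h'' | h'' <;> simp [h, h', h'']
      rcases hcol with h | h | h
      · exact Or.inl (hsame v w₁ w₂ h₁.1 h₂.1 h
          (by rcases h₁.2 with h' | h' <;> simp [h']))
      · exact Or.inr (Or.inl (hsame v w₁ w₃ h₁.1 h₃.1 h
          (by rcases h₁.2 with h' | h' <;> simp [h'])))
      · exact Or.inr (Or.inr (hsame v w₂ w₃ h₂.1 h₃.1 h
          (by rcases h₂.2 with h' | h' <;> simp [h'])))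
    -- degree ≤ 1 at x and at vertices where β is free
    have hdegx : ∀ w₁ w₂, H.Adj x w₁ → H.Adj x w₂ → w₁ = w₂ := by
      intro w₁ w₂ h₁ h₂
      have e₁ : c s(x, w₁) = some β := by
        rcases h₁.2 with h | h
        · exact absurd h (hα w₁ h₁.1)
        · exact h
      have e₂ : c s(x, w₂) = some β := by
        rcases h₂.2 with h | h
        · exact absurd h (hα w₂ h₂.1)
        · exact h
      exact hsame x w₁ w₂ h₁.1 h₂.1 (e₁.trans e₂.symm) (by simp [e₁])
    have hdegfree : ∀ v, Free G c v β → ∀ w₁ w₂, H.Adj v w₁ → H.Adj v w₂ → w₁ = w₂ := by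
      intro v hv w₁ w₂ h₁ h₂
      have e₁ : c s(v, w₁) = some α := by
        rcases h₁.2 with h | h
        · exact h
        · exact absurd h (hv w₁ h₁.1)
      have e₂ : c s(v, w₂) = some α := by
        rcases h₂.2 with h | h
        · exact h
        · exact absurd h (hv w₂ h₂.1)
      exact hsame v w₁ w₂ h₁.1 h₂.1 (e₁.trans e₂.symm) (by simp [e₁])
    have hnotboth : ¬ (H.Reachable x (y t) ∧ H.Reachable x (y k)) := by
      rintro ⟨h1, h2⟩
      exact three_endpoints H hH2 hdegx (hdegfree (y t) hfree_t) (hdegfree (y k) hβ)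
        (hfan.adj t (by omega)).ne (hfan.adj k le_rfl).ne
        (fun h => by have := hfan.inj t (by omega) k le_rfl h; omega) h1 h2
    -- the β-edge at x is unique (it is x y_{t+1})
    have huniq : ∀ i, i ≤ k → c s(x, y i) = some β → i = t + 1 := by
      intro i hi hci
      have := hsame x (y i) (y (t+1)) (hfan.adj i hi) (hfan.adj (t+1) (by omega))
        (hci.trans hcz.symm) (by simp [hci])
      exact hfan.inj i hi (t+1) (by omega) this
    have hxreach : H.Reachable x x := SimpleGraph.Reachable.refl x
    have hfswβ : fsw α β β = α := by simp [fsw, hαβ.symm]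
    have hfswα : fsw α β α = β := by simp [fsw]
    have hβx' : Free G (swapc G c α β x) x β := by
      apply free_swapc_of_reachable hxreach
      rwa [hfswβ]
    -- fan colors other than the β-edge are untouched by the swap
    have hfan_col : ∀ i, i < k → i ≠ t → ∀ a, c s(x, y (i+1)) = some a →
        a ≠ α ∧ a ≠ β := by
      intro i hik hit a ha
      constructor
      · rintro rfl
        exact hα (y (i+1)) (hfan.adj (i+1) (by omega)) ha
      · rintro rfl
        have := huniq (i+1) (by omega) ha
        omega
    by_cases hrt : H.Reachable x (y t)
    · -- y k is not reachable; shift the whole fan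
      have hrk : ¬ H.Reachable x (y k) := fun h => hnotboth ⟨hrt, h⟩
      set c₁ := swapc G c α β x with hc₁
      have hfan' : IsFan G c₁ x k y := by
        refine ⟨hfan.adj, hfan.inj, ?_, ?_, ?_⟩
        · rw [hc₁, swapc_none_iff]; exact hfan.h0
        · intro i hi
          rw [hc₁, Ne, swapc_none_iff]; exact hfan.hcol i hi
        · intro i hi a ha
          rw [hc₁, swapc_of_reachable hxreach, osw_eq_some_iff] at ha
          by_cases hit : i = t
          · subst hit
            rw [hcz] at ha
            have h2 : fsw α β a = β := (Option.some.inj ha).symm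
            have haval : a = α := by
              have := congrArg (fsw α β) h2
              rwa [fsw_fsw, hfswβ] at this
            subst haval
            apply free_swapc_of_reachable hrt
            rwa [hfswα]
          · have hne := hfan_col i hi hit (fsw α β a) ha
            have ha1 : a ≠ β := by rintro rfl; exact hne.1 hfswβ
            have ha2 : a ≠ α := by rintro rfl; exact hne.2 hfswα
            have haa : fsw α β a = a := by simp [fsw, ha1, ha2]
            rw [haa] at ha
            exact free_swapc_of_ne ha2 ha1 (hfan.hfree i hi a ha)
      have hβm' : Free G c₁ (y k) β := free_swapc_of_not_reachable hrk hβ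
      obtain ⟨c'', h1, h2, h3⟩ := fill (swapc_proper hc) hfan' le_rfl hβx' hβm'
      refine ⟨c'', h1, h2, fun e he => h3 e ?_⟩
      rw [Ne, swapc_none_iff]; exact he
    · -- y t is not reachable; shift the fan only up to t
      set c₁ := swapc G c α β x with hc₁
      have hfan' : IsFan G c₁ x t y := by
        refine ⟨fun i hi => hfan.adj i (by omega), fun i hi j hj => hfan.inj i (by omega) j (by omega), ?_, ?_, ?_⟩
        · rw [hc₁, swapc_none_iff]; exact hfan.h0
        · intro i hi
          rw [hc₁, Ne, swapc_none_iff]; exact hfan.hcol i (by omega)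
        · intro i hi a ha
          rw [hc₁, swapc_of_reachable hxreach, osw_eq_some_iff] at ha
          have hne := hfan_col i (by omega) (by omega) (fsw α β a) ha
          have ha1 : a ≠ β := by rintro rfl; exact hne.1 hfswβ
          have ha2 : a ≠ α := by rintro rfl; exact hne.2 hfswα
          have haa : fsw α β a = a := by simp [fsw, ha1, ha2]
          rw [haa] at ha
          exact free_swapc_of_ne ha2 ha1 (hfan.hfree i (by omega) a ha)
      have hβm' : Free G c₁ (y t) β := free_swapc_of_not_reachable hrt hfree_t
      obtain ⟨c'', h1, h2, h3⟩ := fill (swapc_proper hc) hfan' le_rfl hβx' hβm'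
      refine ⟨c'', h1, h2, fun e he => h3 e ?_⟩
      rw [Ne, swapc_none_iff]; exact he


lemma all_colored {d : ℕ} [DecidableRel G.Adj] (hd : ∀ v, G.degree v ≤ d) :
    ∃ c : Sym2 V → Option (Fin (d+1)), Proper G c ∧ ∀ e ∈ G.edgeSet, c e ≠ none := by
  classical
  suffices H : ∀ S : Finset (Sym2 V), ↑S ⊆ G.edgeSet →
      ∃ c : Sym2 V → Option (Fin (d+1)), Proper G c ∧ ∀ e ∈ S, c e ≠ none by
    obtain ⟨c, h1, h2⟩ := H G.edgeFinset (by simp)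
    exact ⟨c, h1, fun e he => h2 e (SimpleGraph.mem_edgeFinset.mpr he)⟩
  intro S
  induction S using Finset.induction_on with
  | empty =>
    exact fun _ => ⟨fun _ => none, fun v w w' _ _ _ a h => by simp at h, by simp⟩
  | @insert e S he ih =>
    intro hsub
    obtain ⟨c, hc, hcol⟩ := ih (fun z hz => hsub (by simp [hz]))
    by_cases hce : c e = none
    · have heE : e ∈ G.edgeSet := hsub (by simp)
      induction e using Sym2.ind with
      | _ x z =>
        have hadj : G.Adj x z := G.mem_edgeSet.mp heE
        obtain ⟨c', h1, h2, h3⟩ := extend hd hc hadj hce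
        refine ⟨c', h1, fun e' he' => ?_⟩
        rcases Finset.mem_insert.mp he' with rfl | h
        · exact h2
        · exact h3 e' (hcol e' h)
    · refine ⟨c, hc, fun e' he' => ?_⟩
      rcases Finset.mem_insert.mp he' with rfl | h
      · exact hce
      · exact hcol e' h

end machinery

/-- Vizing's theorem together with the trivial lower bound:
`Δ(G) ≤ χ₁(G) ≤ Δ(G) + 1` for every finite simple graph `G`. -/
theorem vizing {V : Type*} [Fintype V] (G : SimpleGraph V)
    [DecidableRel G.Adj] :
    G.maxDegree ≤ chromIndex G ∧ chromIndex G ≤ G.maxDegree + 1 := by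
  classical
  obtain ⟨c, hc, hcol⟩ := all_colored (G := G) (d := G.maxDegree)
    (fun v => G.degree_le_maxDegree v)
  set f : Sym2 V → Fin (G.maxDegree + 1) :=
    fun e => (c e).getD ⟨0, Nat.succ_pos _⟩ with hf_def
  have hf : ProperEdgeColoring G (G.maxDegree + 1) f := by
    rintro e he e' he' hnee ⟨v, hv, hv'⟩
    obtain ⟨w, rfl⟩ := Sym2.mem_iff_exists.mp hv
    obtain ⟨w', rfl⟩ := Sym2.mem_iff_exists.mp hv'
    have hvw : G.Adj v w := G.mem_edgeSet.mp he
    have hvw' : G.Adj v w' := G.mem_edgeSet.mp he'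
    have hww : w ≠ w' := fun h => hnee (by rw [h])
    obtain ⟨a, ha⟩ := Option.ne_none_iff_exists'.mp (hcol _ he)
    obtain ⟨a', ha'⟩ := Option.ne_none_iff_exists'.mp (hcol _ he')
    have hne := hc hvw hvw' hww a ha
    intro hcontra
    apply hne
    rw [ha']
    congr 1
    have h1 : f s(v, w) = a := by simp [hf_def, ha]
    have h2 : f s(v, w') = a' := by simp [hf_def, ha']
    rw [← h1, ← h2, hcontra]
  have hmem : (G.maxDegree + 1) ∈ {k | ∃ f : Sym2 V → Fin k, ProperEdgeColoring G k f} :=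
    ⟨f, hf⟩
  have hSne : {k | ∃ f : Sym2 V → Fin k, ProperEdgeColoring G k f}.Nonempty := ⟨_, hmem⟩
  constructor
  · obtain ⟨g, hg⟩ := Nat.sInf_mem hSne
    apply G.maxDegree_le_of_forall_degree_le
    intro v
    have hinj : Set.InjOn (fun w => g s(v, w)) (G.neighborFinset v) := by
      intro w hw w' hw' heq
      by_contra hne'
      simp only [Finset.coe_sort_coe, Finset.mem_coe, SimpleGraph.mem_neighborFinset] at hw hw'
      have hedges : s(v, w) ≠ s(v, w') := fun h => hne' (Sym2.congr_right.mp h)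
      exact hg s(v, w) (G.mem_edgeSet.mpr hw) s(v, w')
        (G.mem_edgeSet.mpr hw') hedges
        ⟨v, Sym2.mem_mk_left v w, Sym2.mem_mk_left v w'⟩ heq
    have := Finset.card_le_card_of_injOn (fun w => g s(v, w))
      (fun w _ => Finset.mem_univ _) hinj
    rwa [Finset.card_univ, Fintype.card_fin, ← SimpleGraph.card_neighborFinset_eq_degree] at *
  · exact Nat.sInf_le hmem

end Colorful
end

section
/- The colorful exchange graph G^c_n is a covering of the uncolored exchange graph G_n: the map sending a colored triangulation to its underlying (support) triangulation is a surjective graph homomorphism under which every vertex of G^c_n has its n incident edges mapped bijectively to the n incident edges of its image, and every fiber has exactly n! elements. -/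
namespace Colorful

/-- `x` lies strictly inside the (counterclockwise) arc from `a` to `b` of a convex
`m`-gon whose vertices are labeled by `ZMod m` in cyclic order. -/
def StrictArc (m : ℕ) (a b x : ZMod m) : Prop :=
  0 < (x - a).val ∧ (x - a).val < (b - a).val

/-- `d` is a diagonal of the convex `m`-gon: an unordered pair of distinct,
non-adjacent vertices. -/
def IsDiag (m : ℕ) (d : Finset (ZMod m)) : Prop :=
  ∃ a b : ZMod m, d = {a, b} ∧ a ≠ b ∧ a ≠ b + 1 ∧ b ≠ a + 1

/-- Two diagonals of the convex `m`-gon cross (in their interiors). -/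
def Cross (m : ℕ) (d e : Finset (ZMod m)) : Prop :=
  ∃ a b c c' : ZMod m, d = {a, b} ∧ e = {c, c'} ∧
    StrictArc m a b c ∧ StrictArc m b a c'

/-- A triangulation of the convex `m`-gon: a maximal family of pairwise
noncrossing diagonals; equivalently it consists of exactly `m - 3` diagonals. -/
def IsTriangulation (m : ℕ) (s : Finset (Finset (ZMod m))) : Prop :=
  (∀ d ∈ s, IsDiag m d) ∧ (∀ d ∈ s, ∀ e ∈ s, d ≠ e → ¬ Cross m d e) ∧
    s.card = m - 3

/-- A diagonal-colored triangulation of the convex `(n+3)`-gon: a set of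
(diagonal, color) pairs whose diagonals form a triangulation, where the coloring
is a function on the diagonals (`(s.image Prod.fst).card = s.card`) that is
injective, hence bijective, onto the `n`-element color set `Fin n`
(`(s.image Prod.snd).card = s.card`). -/
def CTri (n : ℕ) (s : Finset (Finset (ZMod (n + 3)) × Fin n)) : Prop :=
  IsTriangulation (n + 3) (s.image Prod.fst) ∧
  (s.image Prod.fst).card = s.card ∧ (s.image Prod.snd).card = s.card

/-- Adjacency in the colorful exchange graph: `t` is obtained from `s` by
flipping the single diagonal `d` of color `c` to the diagonal `e`, preserving
its color. -/
def CAdj (n : ℕ) (s t : Finset (Finset (ZMod (n + 3)) × Fin n)) : Prop :=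
  CTri n s ∧ CTri n t ∧ ∃ d e c, d ≠ e ∧ (d, c) ∈ s ∧ (e, c) ∈ t ∧
    t = insert (e, c) (s.erase (d, c))

/-- The colorful exchange graph `G^c_n` on diagonal-colored triangulations. -/
def cgraph (n : ℕ) : SimpleGraph {s // CTri n s} where
  Adj s t := s ≠ t ∧ (CAdj n s.val t.val ∨ CAdj n t.val s.val)
  symm := ⟨fun s t h => ⟨h.1.symm, h.2.symm⟩⟩
  loopless := ⟨fun s h => h.1 rfl⟩

/-- Adjacency in the (uncolored) exchange graph `G_n`: triangulations `s` and
`t` differ by the flip of a single diagonal. -/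
def UAdj (n : ℕ) (s t : Finset (Finset (ZMod (n + 3)))) : Prop :=
  IsTriangulation (n + 3) s ∧ IsTriangulation (n + 3) t ∧ s ≠ t ∧
    ∃ d e, d ∈ s ∧ t = insert e (s.erase d)

-- ===== auxiliary =====
variable {n : ℕ}

lemma tri_card {t : Finset (Finset (ZMod (n + 3)))} (h : IsTriangulation (n + 3) t) :
    t.card = n := by
  have := h.2.2; omega

lemma CTri.scard {s} (h : CTri n s) : s.card = n := by
  have h1 := h.2.1; have h2 := tri_card h.1; omega

lemma CTri.injOn_fst {s : Finset (Finset (ZMod (n + 3)) × Fin n)} (h : CTri n s) :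
    Set.InjOn Prod.fst (s : Set (Finset (ZMod (n + 3)) × Fin n)) :=
  Finset.card_image_iff.mp h.2.1

lemma CTri.injOn_snd {s : Finset (Finset (ZMod (n + 3)) × Fin n)} (h : CTri n s) :
    Set.InjOn Prod.snd (s : Set (Finset (ZMod (n + 3)) × Fin n)) :=
  Finset.card_image_iff.mp h.2.2

lemma CTri.color_unique {s} (h : CTri n s) {d c c'} (h1 : (d, c) ∈ s)
    (h2 : (d, c') ∈ s) : c = c' :=
  congrArg Prod.snd (h.injOn_fst h1 h2 rfl)

lemma CTri.diag_unique {s} (h : CTri n s) {d d' c} (h1 : (d, c) ∈ s)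
    (h2 : (d', c) ∈ s) : d = d' :=
  congrArg Prod.fst (h.injOn_snd h1 h2 rfl)

lemma image_erase_of_injOn {α β : Type*} [DecidableEq α] [DecidableEq β]
    {f : α → β} {s : Finset α} {a : α} (ha : a ∈ s) (h : Set.InjOn f (s : Set α)) :
    (s.erase a).image f = (s.image f).erase (f a) := by
  ext x
  simp only [Finset.mem_image, Finset.mem_erase]
  constructor
  · rintro ⟨b, ⟨hba, hb⟩, rfl⟩
    exact ⟨fun he => hba (h hb ha he), b, hb, rfl⟩
  · rintro ⟨hx, b, hb, rfl⟩
    exact ⟨b, ⟨fun hba => hx (by rw [hba]), hb⟩, rfl⟩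


lemma CAdj.data {s t : Finset (Finset (ZMod (n + 3)) × Fin n)} (h : CAdj n s t) :
    ∃ d e c, d ≠ e ∧ (d, c) ∈ s ∧ (e, c) ∈ t ∧
      t = insert (e, c) (s.erase (d, c)) ∧
      e ∉ s.image Prod.fst ∧ d ∉ t.image Prod.fst ∧
      t.image Prod.fst = insert e ((s.image Prod.fst).erase d) := by
  obtain ⟨hs, ht, d, e, c, hde, hds, het, hteq⟩ := h
  have hed : (e, c) ≠ (d, c) := by
    intro hh; exact hde (congrArg Prod.fst hh).symm
  have hesf : e ∉ s.image Prod.fst := by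
    intro he
    obtain ⟨⟨e', c'⟩, hmem, hfst⟩ := Finset.mem_image.mp he
    simp only at hfst
    rw [hfst] at hmem
    have hct : (e, c') ∈ t := by
      rw [hteq]
      rcases eq_or_ne c' c with rfl | hcc
      · exact Finset.mem_insert_self _ _
      · exact Finset.mem_insert_of_mem (Finset.mem_erase.mpr
          ⟨fun hh => hde (congrArg Prod.fst hh).symm, hmem⟩)
    have hcc' : c = c' := ht.color_unique het hct
    subst hcc'
    have : t = s.erase (d, c) := by
      rw [hteq, Finset.insert_eq_self.mpr (Finset.mem_erase.mpr ⟨hed, hmem⟩)]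
    have h1 : t.card = n := ht.scard
    have h2 : s.card = n := hs.scard
    have h3 : (s.erase (d, c)).card = n - 1 := by rw [Finset.card_erase_of_mem hds, h2]
    have hn : 0 < n := c.pos
    have h4 : t.card = n - 1 := by rw [this, h3]
    omega
  have hdtf : d ∉ t.image Prod.fst := by
    intro hd
    obtain ⟨⟨d', c'⟩, hmem, hfst⟩ := Finset.mem_image.mp hd
    simp only at hfst
    rw [hfst] at hmem
    rw [hteq] at hmem
    rcases Finset.mem_insert.mp hmem with hh | hh
    · exact hde (congrArg Prod.fst hh)
    · have := hs.color_unique hds (Finset.mem_of_mem_erase hh)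
      exact (Finset.mem_erase.mp hh).1 (by rw [this])
  refine ⟨d, e, c, hde, hds, het, hteq, hesf, hdtf, ?_⟩
  rw [hteq, Finset.image_insert, image_erase_of_injOn hds hs.injOn_fst]


lemma cadj_uadj {s t : Finset (Finset (ZMod (n + 3)) × Fin n)} (h : CAdj n s t) :
    UAdj n (s.image Prod.fst) (t.image Prod.fst) := by
  obtain ⟨d, e, c, hde, hds, het, hteq, hesf, hdtf, himg⟩ := h.data
  have hdsf : d ∈ s.image Prod.fst := Finset.mem_image_of_mem _ hds
  refine ⟨h.1.1, h.2.1.1, fun hh => hdtf (hh ▸ hdsf), d, e, hdsf, himg⟩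

/-- colorize a triangulation by a function on its elements -/
def colorize (t : Finset (Finset (ZMod (n + 3)))) (e : {d // d ∈ t} → Fin n) :
    Finset (Finset (ZMod (n + 3)) × Fin n) :=
  t.attach.image (fun d => (d.1, e d))

lemma mem_colorize {t : Finset (Finset (ZMod (n + 3)))} {e : {d // d ∈ t} → Fin n}
    {d : Finset (ZMod (n + 3))} {c : Fin n} :
    (d, c) ∈ colorize t e ↔ ∃ hd : d ∈ t, e ⟨d, hd⟩ = c := by
  simp only [colorize, Finset.mem_image, Finset.mem_attach, true_and, Prod.mk.injEq,
    Subtype.exists]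
  constructor
  · rintro ⟨a, ha, rfl, rfl⟩; exact ⟨ha, rfl⟩
  · rintro ⟨hd, rfl⟩; exact ⟨d, hd, rfl, rfl⟩

lemma colorize_image_fst (t : Finset (Finset (ZMod (n + 3)))) (e : {d // d ∈ t} → Fin n) :
    (colorize t e).image Prod.fst = t := by
  ext d
  simp [colorize, Finset.image_image]

lemma colorize_card (t : Finset (Finset (ZMod (n + 3)))) (e : {d // d ∈ t} → Fin n) :
    (colorize t e).card = t.card := by
  rw [colorize, Finset.card_image_of_injective _ ?_, Finset.card_attach]
  intro a b hab
  exact Subtype.ext (congrArg Prod.fst hab)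

lemma colorize_ctri {t : Finset (Finset (ZMod (n + 3)))} (ht : IsTriangulation (n + 3) t)
    (e : {d // d ∈ t} ≃ Fin n) : CTri n (colorize t e) := by
  have h1 : (colorize t e).image Prod.fst = t := colorize_image_fst t e
  have hc : (colorize t e).card = t.card := colorize_card t e
  refine ⟨by rw [h1]; exact ht, by rw [h1, hc], ?_⟩
  have h2 : (colorize t e).image Prod.snd = Finset.univ := by
    ext c
    simp only [Finset.mem_univ, iff_true, colorize, Finset.image_image, Finset.mem_image,
      Finset.mem_attach, true_and]
    exact ⟨e.symm c, by simp⟩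
  rw [h2, hc, Finset.card_univ, Fintype.card_fin, tri_card ht]


noncomputable def colorFun (s : Finset (Finset (ZMod (n + 3)) × Fin n))
    (d : {x // x ∈ s.image Prod.fst}) : Fin n :=
  (Finset.mem_image.mp d.2).choose.2

lemma colorFun_mem (s : Finset (Finset (ZMod (n + 3)) × Fin n))
    (d : {x // x ∈ s.image Prod.fst}) : (d.1, colorFun s d) ∈ s := by
  obtain ⟨h1, h2⟩ := (Finset.mem_image.mp d.2).choose_spec
  have heq : ((d : Finset (ZMod (n + 3))), colorFun s d)
      = (Finset.mem_image.mp d.2).choose := Prod.ext h2.symm rfl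
  rw [heq]; exact h1

lemma colorFun_eq {s : Finset (Finset (ZMod (n + 3)) × Fin n)} (hs : CTri n s)
    {d : {x // x ∈ s.image Prod.fst}} {c : Fin n} (h : (d.1, c) ∈ s) :
    colorFun s d = c :=
  hs.color_unique (colorFun_mem s d) h

lemma colorFun_injective {s : Finset (Finset (ZMod (n + 3)) × Fin n)} (hs : CTri n s) :
    Function.Injective (colorFun s) := by
  intro d1 d2 hh
  have h1 := colorFun_mem s d1
  have h2 := colorFun_mem s d2
  rw [hh] at h1
  exact Subtype.ext (hs.diag_unique h1 h2)

noncomputable def colorEquiv {s : Finset (Finset (ZMod (n + 3)) × Fin n)} (hs : CTri n s) :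
    {x // x ∈ s.image Prod.fst} ≃ Fin n :=
  Equiv.ofBijective (colorFun s)
    ((Fintype.bijective_iff_injective_and_card _).mpr
      ⟨colorFun_injective hs, by rw [Fintype.card_coe, hs.2.1, hs.scard, Fintype.card_fin]⟩)

lemma colorize_colorFun {s : Finset (Finset (ZMod (n + 3)) × Fin n)} (hs : CTri n s) :
    colorize (s.image Prod.fst) (fun d => colorFun s d) = s := by
  ext ⟨d, c⟩
  rw [mem_colorize]
  constructor
  · rintro ⟨hd, rfl⟩; exact colorFun_mem s ⟨d, hd⟩
  · intro h
    exact ⟨Finset.mem_image_of_mem _ h, colorFun_eq hs h⟩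

lemma fiber_card {t : Finset (Finset (ZMod (n + 3)))} (ht : IsTriangulation (n + 3) t) :
    Nat.card {s : Finset (Finset (ZMod (n + 3)) × Fin n) //
      CTri n s ∧ s.image Prod.fst = t} = n.factorial := by
  have hbij : Function.Bijective
      (fun e : ({x // x ∈ t} ≃ Fin n) =>
        (⟨colorize t e, colorize_ctri ht e, colorize_image_fst t e⟩ :
          {s : Finset (Finset (ZMod (n + 3)) × Fin n) //
            CTri n s ∧ s.image Prod.fst = t})) := by
    constructor
    · intro e1 e2 hh
      have h2 : colorize t ⇑e1 = colorize t ⇑e2 := congrArg Subtype.val hh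
      ext d
      have hm : ((d : Finset (ZMod (n + 3))), e1 d) ∈ colorize t ⇑e1 :=
        mem_colorize.mpr ⟨d.2, rfl⟩
      rw [h2] at hm
      obtain ⟨hd, hc⟩ := mem_colorize.mp hm
      exact congrArg Fin.val hc.symm
    · rintro ⟨s, hs, himg⟩
      subst himg
      refine ⟨colorEquiv hs, Subtype.ext ?_⟩
      exact colorize_colorFun hs
  rw [← Nat.card_eq_of_bijective _ hbij, Nat.card_eq_fintype_card,
    Fintype.card_equiv (Fintype.equivFinOfCardEq
      (by rw [Fintype.card_coe, tri_card ht])),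
    Fintype.card_coe, tri_card ht]


lemma cadj_injOn {s : Finset (Finset (ZMod (n + 3)) × Fin n)} (hs : CTri n s) :
    Set.InjOn (fun t : Finset (Finset (ZMod (n + 3)) × Fin n) => t.image Prod.fst)
      {t | CAdj n s t} := by
  intro t1 h1 t2 h2 himg
  obtain ⟨d1, e1, c1, hde1, hd1, he1, heq1, hnes1, hnt1, him1⟩ := CAdj.data h1
  obtain ⟨d2, e2, c2, hde2, hd2, he2, heq2, hnes2, hnt2, him2⟩ := CAdj.data h2
  simp only at himg
  have he : e1 = e2 := by
    have hmem : e1 ∈ t2.image Prod.fst := himg ▸ Finset.mem_image_of_mem Prod.fst he1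
    rw [him2] at hmem
    rcases Finset.mem_insert.mp hmem with h | h
    · exact h
    · exact absurd (Finset.mem_of_mem_erase h) hnes1
  have hd : d1 = d2 := by
    have hd1U : d1 ∈ s.image Prod.fst := Finset.mem_image_of_mem _ hd1
    have hno : d1 ∉ t2.image Prod.fst := himg ▸ hnt1
    rw [him2] at hno
    by_contra hne
    exact hno (Finset.mem_insert_of_mem (Finset.mem_erase.mpr ⟨hne, hd1U⟩))
  subst he hd
  have hc : c1 = c2 := hs.color_unique hd1 hd2
  rw [heq1, heq2, hc]

lemma cadj_surjOn {s : Finset (Finset (ZMod (n + 3)) × Fin n)} (hs : CTri n s) :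
    Set.SurjOn (fun t : Finset (Finset (ZMod (n + 3)) × Fin n) => t.image Prod.fst)
      {t | CAdj n s t} {u | UAdj n (s.image Prod.fst) u} := by
  rintro u ⟨hU, hu, hne, d, e, hdU, hueq⟩
  have hn : 0 < n := by
    have h1 := tri_card hU
    have h2 := Finset.card_pos.mpr ⟨d, hdU⟩
    omega
  have hde : d ≠ e := by
    rintro rfl
    exact hne (by rw [hueq, Finset.insert_erase hdU])
  have heU : e ∉ s.image Prod.fst := by
    intro heU
    have hh : u = (s.image Prod.fst).erase d := by
      rw [hueq, Finset.insert_eq_self.mpr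
        (Finset.mem_erase.mpr ⟨fun hh => hde hh.symm, heU⟩)]
    have h1 := tri_card hu
    have h2 := tri_card hU
    rw [hh, Finset.card_erase_of_mem hdU, h2] at h1
    omega
  obtain ⟨⟨d', c⟩, hds, hfst⟩ := Finset.mem_image.mp hdU
  simp only at hfst
  rw [hfst] at hds
  refine ⟨insert (e, c) (s.erase (d, c)), ?_, ?_⟩
  swap
  · show (insert (e, c) (s.erase (d, c))).image Prod.fst = u
    rw [Finset.image_insert, image_erase_of_injOn hds hs.injOn_fst, ← hueq]
  have hecnot : (e, c) ∉ s.erase (d, c) := fun hh =>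
    heU (Finset.mem_image_of_mem _ (Finset.mem_of_mem_erase hh))
  have htimg : (insert (e, c) (s.erase (d, c))).image Prod.fst = u := by
    rw [Finset.image_insert, image_erase_of_injOn hds hs.injOn_fst, ← hueq]
  have htcard : (insert (e, c) (s.erase (d, c))).card = n := by
    rw [Finset.card_insert_of_notMem hecnot, Finset.card_erase_of_mem hds, hs.scard]
    omega
  have hsnd : (insert (e, c) (s.erase (d, c))).image Prod.snd = s.image Prod.snd := by
    rw [Finset.image_insert, image_erase_of_injOn hds hs.injOn_snd]
    show insert c ((s.image Prod.snd).erase c) = s.image Prod.snd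
    exact Finset.insert_erase (Finset.mem_image_of_mem Prod.snd hds)
  have hct : CTri n (insert (e, c) (s.erase (d, c))) := by
    refine ⟨by rw [htimg]; exact hu, ?_, ?_⟩
    · rw [htimg, tri_card hu, htcard]
    · rw [hsnd, hs.2.2, hs.scard, htcard]
  exact ⟨hs, hct, d, e, c, hde, hds, Finset.mem_insert_self _ _, rfl⟩


/-- The support map (forgetting colors) exhibits `G^c_n` as a
covering of `G_n`: it is surjective onto the triangulations, maps edges to
edges, maps the `n` edges at each vertex bijectively onto the `n` edges at the
image vertex, and all its fibers have exactly `n!` elements. -/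
theorem cgraph_covers_ugraph (n : ℕ) :
    (∀ t, IsTriangulation (n + 3) t →
      ∃ s, CTri n s ∧ s.image Prod.fst = t) ∧
    (∀ s t, CAdj n s t → UAdj n (s.image Prod.fst) (t.image Prod.fst)) ∧
    (∀ s, CTri n s →
      Set.BijOn (fun t : Finset (Finset (ZMod (n + 3)) × Fin n) =>
          t.image Prod.fst)
        {t | CAdj n s t} {u | UAdj n (s.image Prod.fst) u}) ∧
    (∀ t, IsTriangulation (n + 3) t →
      Nat.card {s : Finset (Finset (ZMod (n + 3)) × Fin n) //
        CTri n s ∧ s.image Prod.fst = t} = n.factorial) := by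
  refine ⟨?_, fun s t h => cadj_uadj h, ?_, fun t ht => fiber_card ht⟩
  · intro t ht
    exact ⟨colorize t (Fintype.equivFinOfCardEq
        (by rw [Fintype.card_coe, tri_card ht])),
      colorize_ctri ht _, colorize_image_fst t _⟩
  · intro s hs
    exact ⟨fun t h => cadj_uadj h, cadj_injOn hs, cadj_surjOn hs⟩


end Colorful
end

section
/- For n ≥ 2, if an automorphism γ of the associahedron A_n fixes the two facets F_j and F_{j+1} corresponding to adjacent vertices j, j+1 of the (n+3)-gon, then γ is the identity automorphism. -/
namespace Colorful

/-- A (partial) dissection of the convex `m`-gon: a set of pairwise noncrossing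
diagonals. The faces of the associahedron correspond to dissections, ordered by
reverse inclusion of the diagonal sets. -/
def Dissection (m : ℕ) (s : Finset (Finset (ZMod m))) : Prop :=
  (∀ d ∈ s, IsDiag m d) ∧ ∀ d ∈ s, ∀ e ∈ s, d ≠ e → ¬ Cross m d e

/-- A short diagonal: one whose endpoints are two steps apart on the boundary. -/
def IsShort (m : ℕ) (d : Finset (ZMod m)) : Prop :=
  ∃ j : ZMod m, d = {j - 1, j + 1}

variable {m : ℕ}

def cd (j x : ZMod m) : ℕ := (x - j).val

lemma cd_lt [NeZero m] (j x : ZMod m) : cd j x < m := ZMod.val_lt _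

lemma cd_inj [NeZero m] {j x y : ZMod m} : cd j x = cd j y ↔ x = y := by
  constructor
  · intro h
    have := ZMod.val_injective m h
    exact sub_left_inj.mp this
  · rintro rfl; rfl

lemma cd_ne [NeZero m] {j x y : ZMod m} (h : cd j x ≠ cd j y) : x ≠ y :=
  fun he => h (by rw [he])

lemma cd_self [NeZero m] (j : ZMod m) : cd j j = 0 := by simp [cd]

lemma val_sub' [NeZero m] (x y : ZMod m) : (x - y).val = (x.val + (m - y.val)) % m := by
  have h : ((m - y.val : ℕ) : ZMod m) = -y := by
    apply eq_neg_of_add_eq_zero_left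
    have h2 : ((m - y.val : ℕ) : ZMod m) + ((y.val : ℕ) : ZMod m) = 0 := by
      rw [← Nat.cast_add, Nat.sub_add_cancel (ZMod.val_lt y).le, ZMod.natCast_self]
    simpa [ZMod.natCast_rightInverse y] using h2
  rw [sub_eq_add_neg, ← h, ZMod.val_add, ZMod.val_natCast, Nat.add_mod_mod]

lemma val_sub_cd [NeZero m] (j x y : ZMod m) :
    (x - y).val = if cd j y ≤ cd j x then cd j x - cd j y else cd j x + m - cd j y := by
  have h : x - y = (x - j) - (y - j) := by ring
  rw [h, val_sub']
  simp only [cd]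
  have hx := ZMod.val_lt (x - j)
  have hy := ZMod.val_lt (y - j)
  split_ifs with hle
  · simp only [hle, if_true, if_false, not_false_eq_true]
    have h2 : (x - j).val + (m - (y - j).val) = m + ((x - j).val - (y - j).val) := by omega
    rw [h2, Nat.add_mod_left, Nat.mod_eq_of_lt (by omega)]
  · simp only [hle, if_true, if_false, not_false_eq_true]
    rw [Nat.mod_eq_of_lt (by omega)]
    omega

lemma cd_add_cast [NeZero m] (j : ZMod m) {c : ℕ} (h : c < m) : cd j (j + (c : ZMod m)) = c := by
  show ((j + (c : ZMod m)) - j).val = c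
  rw [add_sub_cancel_left, ZMod.val_cast_of_lt h]

lemma cd_one [NeZero m] (hm : 5 ≤ m) (j : ZMod m) : cd j (j + 1) = 1 := by
  have := cd_add_cast j (show 1 < m by omega)
  simpa using this

lemma cd_two [NeZero m] (hm : 5 ≤ m) (j : ZMod m) : cd j (j + 2) = 2 := by
  have := cd_add_cast j (show 2 < m by omega)
  rw [Nat.cast_ofNat] at this
  exact this

lemma cd_three [NeZero m] (hm : 5 ≤ m) (j : ZMod m) : cd j (j + 3) = 3 := by
  have := cd_add_cast j (show 3 < m by omega)
  rw [Nat.cast_ofNat] at this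
  exact this

lemma cd_four [NeZero m] (hm : 5 ≤ m) (j : ZMod m) : cd j (j + 4) = 4 := by
  have := cd_add_cast j (show 4 < m by omega)
  rw [Nat.cast_ofNat] at this
  exact this

lemma cd_sub_one [NeZero m] (hm : 5 ≤ m) (j : ZMod m) : cd j (j - 1) = m - 1 := by
  show ((j - 1) - j).val = m - 1
  rw [show (j - 1) - j = (0 : ZMod m) - 1 by ring, val_sub']
  haveI : Fact (1 < m) := ⟨by omega⟩
  simp [ZMod.val_one m]

lemma pair_eq_pair_iff' {α : Type*} [DecidableEq α] {a b c d : α} :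
    ({a, b} : Finset α) = {c, d} ↔ a = c ∧ b = d ∨ a = d ∧ b = c := by
  constructor
  · intro h
    have h2 : ({a, b} : Set α) = {c, d} := by
      have := congrArg (fun s : Finset α => (s : Set α)) h
      simpa using this
    exact Set.pair_eq_pair_iff.mp h2
  · rintro (⟨rfl, rfl⟩ | ⟨rfl, rfl⟩)
    · rfl
    · exact Finset.pair_comm _ _

lemma cross_pair_iff {a b c d : ZMod m} :
    Cross m {a, b} {c, d} ↔
      (StrictArc m a b c ∧ StrictArc m b a d) ∨ (StrictArc m a b d ∧ StrictArc m b a c) := by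
  constructor
  · rintro ⟨a', b', c', d', h1, h2, s1, s2⟩
    rcases pair_eq_pair_iff'.mp h1 with ⟨rfl, rfl⟩ | ⟨rfl, rfl⟩ <;>
      rcases pair_eq_pair_iff'.mp h2 with ⟨rfl, rfl⟩ | ⟨rfl, rfl⟩
    · exact Or.inl ⟨s1, s2⟩
    · exact Or.inr ⟨s1, s2⟩
    · exact Or.inr ⟨s2, s1⟩
    · exact Or.inl ⟨s2, s1⟩
  · rintro (⟨s1, s2⟩ | ⟨s1, s2⟩)
    · exact ⟨a, b, c, d, rfl, rfl, s1, s2⟩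
    · exact ⟨a, b, d, c, rfl, Finset.pair_comm c d, s1, s2⟩

/-- the short diagonal at vertex `j` -/
def short (m : ℕ) (j : ZMod m) : Finset (ZMod m) := {j - 1, j + 1}

lemma short_succ [NeZero m] (j : ZMod m) : short m (j + 1) = {j, j + 2} := by
  unfold short
  rw [show j + 1 - 1 = j by ring, show j + 1 + 1 = j + 2 by ring]

lemma short_succ2 [NeZero m] (j : ZMod m) : short m (j + 2) = {j + 1, j + 3} := by
  unfold short
  rw [show j + 2 - 1 = j + 1 by ring, show j + 2 + 1 = j + 3 by ring]

lemma diag_short [NeZero m] (hm : 5 ≤ m) (i : ZMod m) : IsDiag m (short m i) := by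
  refine ⟨i - 1, i + 1, rfl, ?_, ?_, ?_⟩
  · apply cd_ne (j := i)
    rw [cd_sub_one hm, cd_one hm]; omega
  · apply cd_ne (j := i)
    rw [show i + 1 + 1 = i + 2 by ring, cd_sub_one hm, cd_two hm]; omega
  · apply cd_ne (j := i)
    rw [show i - 1 + 1 = i by ring, cd_one hm, cd_self]; omega

lemma diag_j3 [NeZero m] (hm : 5 ≤ m) (j : ZMod m) : IsDiag m {j, j + 3} := by
  refine ⟨j, j + 3, rfl, ?_, ?_, ?_⟩
  · apply cd_ne (j := j); rw [cd_self, cd_three hm]; omega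
  · apply cd_ne (j := j)
    rw [show j + 3 + 1 = j + 4 by ring, cd_self, cd_four hm]; omega
  · apply cd_ne (j := j); rw [cd_three hm, cd_one hm]; omega

lemma diag_mem_repr [NeZero m] {d : Finset (ZMod m)} {j : ZMod m}
    (hd : IsDiag m d) (hj : j ∈ d) :
    ∃ x, d = {j, x} ∧ x ≠ j ∧ x ≠ j + 1 ∧ x ≠ j - 1 := by
  obtain ⟨a, b, rfl, h1, h2, h3⟩ := hd
  rw [Finset.mem_insert, Finset.mem_singleton] at hj
  rcases hj with rfl | rfl
  · exact ⟨b, rfl, Ne.symm h1, fun hb => h3 (by rw [hb]), fun hb => h2 (by rw [hb]; ring)⟩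
  · refine ⟨a, Finset.pair_comm a j, h1, fun ha => h2 (by rw [ha]), fun ha => h3 (by rw [ha]; ring)⟩


lemma short_not_cross_iff [NeZero m] (hm : 5 ≤ m) (j : ZMod m) {d : Finset (ZMod m)}
    (hd : IsDiag m d) :
    (¬ Cross m (short m j) d ∧ ¬ Cross m d (short m j)) ↔ j ∉ d := by
  obtain ⟨a, b, rfl, hab, hab1, hab2⟩ := hd
  unfold short
  have hBa := cd_lt j a
  have hBb := cd_lt j b
  constructor
  · rintro ⟨h1, -⟩ hj
    rw [Finset.mem_insert, Finset.mem_singleton] at hj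
    rcases hj with rfl | rfl
    · have hb0 : cd j b ≠ 0 := fun h => hab (show j = b by rw [← cd_self j] at h; exact (cd_inj.mp h).symm)
      have hb1 : cd j b ≠ 1 := fun h => hab2 (by rw [← cd_one hm j] at h; exact cd_inj.mp h)
      have hbm : cd j b ≠ m - 1 := fun h => hab1 (by
        rw [← cd_sub_one hm j] at h
        rw [cd_inj.mp h]; ring)
      refine h1 ⟨j - 1, j + 1, j, b, rfl, rfl, ?_, ?_⟩ <;>
        · unfold StrictArc
          rw [val_sub_cd j, val_sub_cd j]
          simp only [cd_self, cd_one hm, cd_sub_one hm]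
          split_ifs <;> omega
    · have ha0 : cd j a ≠ 0 := fun h => hab (show a = j by rw [← cd_self j] at h; exact cd_inj.mp h)
      have ha1 : cd j a ≠ 1 := fun h => hab1 (by rw [← cd_one hm j] at h; exact cd_inj.mp h)
      have ham : cd j a ≠ m - 1 := fun h => hab2 (by
        rw [← cd_sub_one hm j] at h
        rw [cd_inj.mp h]; ring)
      refine h1 ⟨j - 1, j + 1, j, a, rfl, Finset.pair_comm a j, ?_, ?_⟩ <;>
        · unfold StrictArc
          rw [val_sub_cd j, val_sub_cd j]
          simp only [cd_self, cd_one hm, cd_sub_one hm]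
          split_ifs <;> omega
  · intro hj
    rw [Finset.mem_insert, Finset.mem_singleton] at hj
    push_neg at hj
    obtain ⟨hja, hjb⟩ := hj
    have ha0 : cd j a ≠ 0 := fun h => hja ((show a = j by rw [← cd_self j] at h; exact cd_inj.mp h)).symm
    have hb0 : cd j b ≠ 0 := fun h => hjb ((show b = j by rw [← cd_self j] at h; exact cd_inj.mp h)).symm
    have hAB : cd j a ≠ cd j b := fun h => hab (cd_inj.mp h)
    constructor
    · intro hc
      rcases cross_pair_iff.mp hc with ⟨s1, s2⟩ | ⟨s1, s2⟩ <;>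
        · unfold StrictArc at s1 s2
          rw [val_sub_cd j, val_sub_cd j] at s1 s2
          simp only [cd_self, cd_one hm, cd_sub_one hm] at s1 s2
          split_ifs at s1 s2 <;> omega
    · intro hc
      rcases cross_pair_iff.mp hc with ⟨s1, s2⟩ | ⟨s1, s2⟩ <;>
        · unfold StrictArc at s1 s2
          rw [val_sub_cd j, val_sub_cd j] at s1 s2
          simp only [cd_self, cd_one hm, cd_sub_one hm] at s1 s2
          split_ifs at s1 s2 <;> omega

/-- C2': a diagonal through `j` crossing `short (j+2) = {j+1, j+3}` must be `{j, j+2}`. -/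
lemma cross_short2 [NeZero m] (hm : 5 ≤ m) (j : ZMod m) {d : Finset (ZMod m)}
    (hd : IsDiag m d) (hj : j ∈ d)
    (hc : Cross m d (short m (j + 2)) ∨ Cross m (short m (j + 2)) d) :
    d = short m (j + 1) := by
  obtain ⟨x, rfl, hx0, hx1, hxm⟩ := diag_mem_repr hd hj
  rw [short_succ2] at hc
  rw [short_succ]
  have hBx := cd_lt j x
  have hX0 : cd j x ≠ 0 := fun h => hx0 (show x = j by rw [← cd_self j] at h; exact cd_inj.mp h)
  have hX1 : cd j x ≠ 1 := fun h => hx1 (by rw [← cd_one hm j] at h; exact cd_inj.mp h)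
  have hXm : cd j x ≠ m - 1 := fun h => hxm (by rw [← cd_sub_one hm j] at h; exact cd_inj.mp h)
  suffices hx2 : x = j + 2 by rw [hx2]
  rw [← cd_inj (j := j) (x := x), cd_two hm]
  rcases hc with hc | hc <;>
    rcases cross_pair_iff.mp hc with ⟨s1, s2⟩ | ⟨s1, s2⟩ <;>
      · unfold StrictArc at s1 s2
        rw [val_sub_cd j, val_sub_cd j] at s1 s2
        simp only [cd_self, cd_one hm, cd_two hm, cd_three hm] at s1 s2
        split_ifs at s1 s2 <;> omega

/-- C2b: `{j, j+3}` crosses `{j+1, w}` for any other vertex `w`. -/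
lemma cross_j3 [NeZero m] (hm : 5 ≤ m) (j w : ZMod m) (h0 : w ≠ j) (h1 : w ≠ j + 1)
    (h2 : w ≠ j + 2) (h3 : w ≠ j + 3) : Cross m {j, j + 3} {j + 1, w} := by
  have hBw := cd_lt j w
  have hW0 : cd j w ≠ 0 := fun h => h0 (show w = j by rw [← cd_self j] at h; exact cd_inj.mp h)
  have hW1 : cd j w ≠ 1 := fun h => h1 (by rw [← cd_one hm j] at h; exact cd_inj.mp h)
  have hW2 : cd j w ≠ 2 := fun h => h2 (by rw [← cd_two hm j] at h; exact cd_inj.mp h)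
  have hW3 : cd j w ≠ 3 := fun h => h3 (by rw [← cd_three hm j] at h; exact cd_inj.mp h)
  refine ⟨j, j + 3, j + 1, w, rfl, rfl, ?_, ?_⟩ <;>
    · unfold StrictArc
      rw [val_sub_cd j, val_sub_cd j]
      simp only [cd_self, cd_one hm, cd_three hm]
      split_ifs <;> omega

/-- C2: uniqueness of the next short diagonal. -/
lemma next_short [NeZero m] (hm : 5 ≤ m) (j : ZMod m) {e : Finset (ZMod m)}
    (he : IsDiag m e) (hj1 : j + 1 ∈ e)
    (hP : ∀ d, IsDiag m d → j ∈ d →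
      (Cross m d e ∨ Cross m e d) → d = short m (j + 1)) :
    e = short m (j + 2) := by
  obtain ⟨w, rfl, hw1, hw2, hw0⟩ := diag_mem_repr he hj1
  rw [show j + 1 + 1 = j + 2 by ring] at hw2
  rw [show j + 1 - 1 = j by ring] at hw0
  by_cases hw3 : w = j + 3
  · rw [hw3, short_succ2]
  · exfalso
    have hcr := cross_j3 hm j w hw0 hw1 hw2 hw3
    have hd3 := diag_j3 hm j
    have heq := hP {j, j + 3} hd3 (by simp) (Or.inl hcr)
    rw [short_succ] at heq
    have hmem : j + 3 ∈ ({j, j + 2} : Finset (ZMod m)) := by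
      rw [← heq]; simp
    rw [Finset.mem_insert, Finset.mem_singleton] at hmem
    rcases hmem with h | h
    · have := cd_inj (j := j).mpr h
      rw [cd_three hm, cd_self] at this; omega
    · have := cd_inj (j := j).mpr h
      rw [cd_three hm, cd_two hm] at this; omega

lemma empty_diss (m : ℕ) : Dissection m ∅ := ⟨by simp, by simp⟩

lemma singleton_diss {d : Finset (ZMod m)} (hd : IsDiag m d) : Dissection m {d} := by
  refine ⟨by simpa using hd, ?_⟩
  intro a ha b hb hab
  rw [Finset.mem_singleton] at ha hb
  exact absurd (ha.trans hb.symm) hab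

lemma pair_diss {d e : Finset (ZMod m)} (hd : IsDiag m d) (he : IsDiag m e)
    (h1 : ¬ Cross m d e) (h2 : ¬ Cross m e d) : Dissection m {d, e} := by
  constructor
  · intro x hx
    rw [Finset.mem_insert, Finset.mem_singleton] at hx
    rcases hx with rfl | rfl <;> assumption
  · intro x hx y hy hxy
    rw [Finset.mem_insert, Finset.mem_singleton] at hx hy
    rcases hx with rfl | rfl <;> rcases hy with rfl | rfl
    · exact absurd rfl hxy
    · exact h1
    · exact h2
    · exact absurd rfl hxy

def atom (m : ℕ) (d : Finset (ZMod m)) (hd : IsDiag m d) :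
    {s : Finset (Finset (ZMod m)) // Dissection m s} := ⟨{d}, singleton_diss hd⟩

lemma atom_inj {d e : Finset (ZMod m)} {hd : IsDiag m d} {he : IsDiag m e}
    (h : atom m d hd = atom m e he) : d = e := by
  simpa [atom, Subtype.ext_iff] using h

lemma atom_image_nonempty
    (γ : {s : Finset (Finset (ZMod m)) // Dissection m s} ≃
      {s : Finset (Finset (ZMod m)) // Dissection m s})
    (hγ : ∀ a b, a.val ⊆ b.val ↔ (γ a).val ⊆ (γ b).val) {d : Finset (ZMod m)}
    (hd : IsDiag m d) : (γ (atom m d hd)).val.Nonempty := by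
  rw [Finset.nonempty_iff_ne_empty]
  intro h
  have h2 := (hγ (atom m d hd) ⟨∅, empty_diss m⟩).mpr (by rw [h]; exact Finset.empty_subset _)
  simp [atom] at h2

lemma map_atom
    (γ : {s : Finset (Finset (ZMod m)) // Dissection m s} ≃
      {s : Finset (Finset (ZMod m)) // Dissection m s})
    (hγ : ∀ a b, a.val ⊆ b.val ↔ (γ a).val ⊆ (γ b).val) {d : Finset (ZMod m)}
    (hd : IsDiag m d) : ∃ e, ∃ he : IsDiag m e, γ (atom m d hd) = atom m e he := by
  have hγ' : ∀ a b, a.val ⊆ b.val ↔ (γ.symm a).val ⊆ (γ.symm b).val := by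
    intro a b
    conv_lhs => rw [← γ.apply_symm_apply a, ← γ.apply_symm_apply b]
    exact (hγ _ _).symm
  obtain ⟨e, he⟩ := atom_image_nonempty γ hγ hd
  have hediag : IsDiag m e := (γ (atom m d hd)).2.1 e he
  have hsub : (γ.symm (atom m e hediag)).val ⊆ (atom m d hd).val := by
    rw [hγ _ _]
    rw [γ.apply_symm_apply]
    simpa [atom] using he
  have hne := atom_image_nonempty γ.symm hγ' hediag
  have hval : (γ.symm (atom m e hediag)).val = {d} := by
    rcases Finset.subset_singleton_iff.mp hsub with h | h
    · exact absurd h (Finset.nonempty_iff_ne_empty.mp hne)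
    · exact h
  have heq : γ.symm (atom m e hediag) = atom m d hd := Subtype.ext hval
  exact ⟨e, hediag, by rw [← heq, γ.apply_symm_apply]⟩

theorem main_aux (m : ℕ) (hm : 5 ≤ m) [NeZero m]
    (γ : {s : Finset (Finset (ZMod m)) // Dissection m s} ≃
      {s : Finset (Finset (ZMod m)) // Dissection m s})
    (hγ : ∀ a b, a.val ⊆ b.val ↔ (γ a).val ⊆ (γ b).val)
    (j : ZMod m)
    (h1 : ∀ a, a.val = {({j - 1, j + 1} : Finset (ZMod m))} → γ a = a)
    (h2 : ∀ a, a.val = {({j, j + 2} : Finset (ZMod m))} → γ a = a) :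
    ∀ a, γ a = a := by
  have hγ' : ∀ a b, a.val ⊆ b.val ↔ (γ.symm a).val ⊆ (γ.symm b).val := by
    intro a b
    conv_lhs => rw [← γ.apply_symm_apply a, ← γ.apply_symm_apply b]
    exact (hγ _ _).symm
  choose φ hφdiag hφeq using fun d (hd : IsDiag m d) => map_atom γ hγ hd
  have hinj : ∀ d hd e he, φ d hd = φ e he → d = e := by
    intro d hd e he h
    have h2 : γ (atom m d hd) = γ (atom m e he) := by
      rw [hφeq d hd, hφeq e he]
      exact Subtype.ext (show ({φ d hd} : Finset (Finset (ZMod m))) = {φ e he} by rw [h])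
    exact atom_inj (γ.injective h2)
  have hsurj : ∀ e (he : IsDiag m e), ∃ d hd, φ d hd = e := by
    intro e he
    obtain ⟨d, hd, hmap⟩ := map_atom γ.symm hγ' he
    refine ⟨d, hd, ?_⟩
    have h3 : γ (atom m d hd) = atom m e he := by
      rw [← hmap, γ.apply_symm_apply]
    rw [hφeq d hd] at h3
    exact atom_inj h3
  have hfix1 : ∀ d (hd : IsDiag m d), d = short m j → φ d hd = d := by
    rintro d hd rfl
    have h := h1 (atom m (short m j) hd) rfl
    rw [hφeq _ hd] at h
    exact atom_inj h
  have hfix2 : ∀ d (hd : IsDiag m d), d = short m (j + 1) → φ d hd = d := by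
    rintro d hd rfl
    have h := h2 (atom m (short m (j + 1)) hd) (show ({short m (j + 1)} : Finset (Finset (ZMod m))) = {{j, j + 2}} by rw [short_succ])
    rw [hφeq _ hd] at h
    exact atom_inj h
  have hNC : ∀ d hd e he, d ≠ e →
      ((¬ Cross m d e ∧ ¬ Cross m e d) ↔
        (¬ Cross m (φ d hd) (φ e he) ∧ ¬ Cross m (φ e he) (φ d hd))) := by
    intro d hd e he hne
    constructor
    · rintro ⟨hc1, hc2⟩
      have hc : Dissection m {d, e} := pair_diss hd he hc1 hc2
      have hdc := (hγ (atom m d hd) ⟨{d, e}, hc⟩).mp (by simp [atom])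
      have hec := (hγ (atom m e he) ⟨{d, e}, hc⟩).mp (by simp [atom])
      rw [hφeq d hd] at hdc
      rw [hφeq e he] at hec
      have hdmem : φ d hd ∈ (γ ⟨{d, e}, hc⟩).val := by simpa [atom] using hdc
      have hemem : φ e he ∈ (γ ⟨{d, e}, hc⟩).val := by simpa [atom] using hec
      have hne' : φ d hd ≠ φ e he := fun h => hne (hinj _ _ _ _ h)
      exact ⟨(γ ⟨{d, e}, hc⟩).2.2 _ hdmem _ hemem hne',
        (γ ⟨{d, e}, hc⟩).2.2 _ hemem _ hdmem hne'.symm⟩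
    · rintro ⟨hc1, hc2⟩
      have hc : Dissection m {φ d hd, φ e he} :=
        pair_diss (hφdiag d hd) (hφdiag e he) hc1 hc2
      have hdc : (atom m d hd).val ⊆ (γ.symm ⟨{φ d hd, φ e he}, hc⟩).val := by
        rw [hγ _ _, hφeq d hd, γ.apply_symm_apply]
        simp [atom]
      have hec : (atom m e he).val ⊆ (γ.symm ⟨{φ d hd, φ e he}, hc⟩).val := by
        rw [hγ _ _, hφeq e he, γ.apply_symm_apply]
        simp [atom]
      have hdmem : d ∈ (γ.symm ⟨{φ d hd, φ e he}, hc⟩).val := by simpa [atom] using hdc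
      have hemem : e ∈ (γ.symm ⟨{φ d hd, φ e he}, hc⟩).val := by simpa [atom] using hec
      exact ⟨(γ.symm ⟨{φ d hd, φ e he}, hc⟩).2.2 _ hdmem _ hemem hne,
        (γ.symm ⟨{φ d hd, φ e he}, hc⟩).2.2 _ hemem _ hdmem hne.symm⟩
  -- the inductive step
  have hstep : ∀ i : ZMod m,
      (∀ d (hd : IsDiag m d), d = short m i → φ d hd = d) →
      (∀ d (hd : IsDiag m d), d = short m (i + 1) → φ d hd = d) →
      (∀ d (hd : IsDiag m d), d = short m (i + 2) → φ d hd = d) := by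
    rintro i Fi Fi1 e he rfl
    have hEdiag := hφdiag _ he
    have hne12 : short m (i + 1) ≠ short m (i + 2) := by
      rw [short_succ, short_succ2]
      intro h
      have hmem : i ∈ ({i + 1, i + 3} : Finset (ZMod m)) := by rw [← h]; simp
      rw [Finset.mem_insert, Finset.mem_singleton] at hmem
      rcases hmem with h' | h'
      · have := cd_inj (j := i).mpr h'
        rw [cd_self, cd_one hm] at this; omega
      · have := cd_inj (j := i).mpr h'
        rw [cd_self, cd_three hm] at this; omega
    have hcr12 : ¬(¬Cross m (short m (i + 1)) (short m (i + 2)) ∧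
        ¬Cross m (short m (i + 2)) (short m (i + 1))) := by
      intro hcc
      have h := (short_not_cross_iff hm (i + 1) (diag_short hm (i + 2))).mp hcc
      apply h
      rw [short_succ2]
      simp
    have hcrE : ¬(¬Cross m (short m (i + 1)) (φ (short m (i + 2)) he) ∧
        ¬Cross m (φ (short m (i + 2)) he) (short m (i + 1))) := by
      intro hcc
      apply hcr12
      rw [hNC (short m (i + 1)) (diag_short hm (i + 1)) (short m (i + 2)) he hne12]
      rw [Fi1 _ (diag_short hm (i + 1)) rfl]
      exact hcc
    have hmem1 : i + 1 ∈ φ (short m (i + 2)) he := by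
      by_contra hmem
      exact hcrE ((short_not_cross_iff hm (i + 1) hEdiag).mpr hmem)
    apply next_short hm i hEdiag hmem1
    intro d hd hid hcd
    obtain ⟨d₀, hd₀, rfl⟩ := hsurj d hd
    have hne0 : short m i ≠ d₀ := by
      intro h
      have hfi : φ d₀ hd₀ = short m i := (Fi d₀ hd₀ h.symm).trans h.symm
      rw [hfi] at hid
      unfold short at hid
      rw [Finset.mem_insert, Finset.mem_singleton] at hid
      rcases hid with h' | h'
      · have := cd_inj (j := i).mpr h'
        rw [cd_self, cd_sub_one hm] at this; omega
      · have := cd_inj (j := i).mpr h'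
        rw [cd_self, cd_one hm] at this; omega
    have hcr0 : ¬(¬Cross m (short m i) (φ d₀ hd₀) ∧
        ¬Cross m (φ d₀ hd₀) (short m i)) := by
      intro hcc
      exact (short_not_cross_iff hm i (hφdiag d₀ hd₀)).mp hcc hid
    have hid0 : i ∈ d₀ := by
      by_contra hmem
      apply hcr0
      have hcc := (short_not_cross_iff hm i hd₀).mpr hmem
      have h := (hNC (short m i) (diag_short hm i) d₀ hd₀ hne0).mp hcc
      rw [Fi _ (diag_short hm i) rfl] at h
      exact h
    have hne2 : d₀ ≠ short m (i + 2) := by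
      intro h
      rw [h, short_succ2, Finset.mem_insert, Finset.mem_singleton] at hid0
      rcases hid0 with h' | h'
      · have := cd_inj (j := i).mpr h'
        rw [cd_self, cd_one hm] at this; omega
      · have := cd_inj (j := i).mpr h'
        rw [cd_self, cd_three hm] at this; omega
    have hcd0 : Cross m d₀ (short m (i + 2)) ∨ Cross m (short m (i + 2)) d₀ := by
      by_contra hcc
      push_neg at hcc
      have h := (hNC d₀ hd₀ (short m (i + 2)) he hne2).mp ⟨hcc.1, hcc.2⟩
      rcases hcd with hc | hc
      · exact h.1 hc
      · exact h.2 hc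
    have hd0eq : d₀ = short m (i + 1) := cross_short2 hm i hd₀ hid0 hcd0
    exact (Fi1 d₀ hd₀ hd0eq).trans hd0eq
  -- every short diagonal is fixed
  have key : ∀ k : ℕ,
      (∀ d (hd : IsDiag m d), d = short m (j + (k : ZMod m)) → φ d hd = d) ∧
      (∀ d (hd : IsDiag m d), d = short m (j + (k : ZMod m) + 1) → φ d hd = d) := by
    intro k
    induction k with
    | zero =>
      constructor
      · rw [Nat.cast_zero, add_zero]; exact hfix1
      · rw [Nat.cast_zero, add_zero]; exact hfix2
    | succ k ih =>
      constructor
      · have he : j + ((k + 1 : ℕ) : ZMod m) = j + (k : ZMod m) + 1 := by push_cast; ring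
        rw [he]; exact ih.2
      · have he : j + ((k + 1 : ℕ) : ZMod m) + 1 = j + (k : ZMod m) + 2 := by push_cast; ring
        rw [he]; exact hstep (j + (k : ZMod m)) ih.1 ih.2
  have allshort : ∀ (i : ZMod m) d (hd : IsDiag m d), d = short m i → φ d hd = d := by
    intro i
    have hi : i = j + (((i - j).val : ℕ) : ZMod m) := by
      rw [ZMod.natCast_rightInverse (i - j)]; ring
    rw [hi]
    exact (key _).1
  have allfix : ∀ d (hd : IsDiag m d), φ d hd = d := by
    intro d hd
    by_cases hs : ∃ i, d = short m i
    · obtain ⟨i, rfl⟩ := hs; exact allshort i _ hd rfl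
    · push_neg at hs
      apply Finset.ext
      intro x
      have hd' := hφdiag d hd
      have hnd : short m x ≠ d := fun h => hs x h.symm
      have t1 := short_not_cross_iff hm x hd'
      have t2 := short_not_cross_iff hm x hd
      have t3 := hNC (short m x) (diag_short hm x) d hd hnd
      rw [allshort x _ (diag_short hm x) rfl] at t3
      have hiff : x ∉ φ d hd ↔ x ∉ d := t1.symm.trans (t3.symm.trans t2)
      exact not_iff_not.mp hiff
  have main_atoms : ∀ d (hd : IsDiag m d), γ (atom m d hd) = atom m d hd := by
    intro d hd
    rw [hφeq d hd]
    exact Subtype.ext (by rw [show (atom m (φ d hd) (hφdiag d hd)).val = {φ d hd} from rfl, allfix d hd]; rfl)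
  intro a
  have hsub1 : a.val ⊆ (γ a).val := by
    intro d hdm
    have hd : IsDiag m d := a.2.1 d hdm
    have h := (hγ (atom m d hd) a).mp (by simpa [atom] using hdm)
    rw [main_atoms d hd] at h
    simpa [atom] using h
  have hsub2 : (γ a).val ⊆ a.val := by
    intro d hdm
    have hd : IsDiag m d := (γ a).2.1 d hdm
    have h := (hγ (atom m d hd) a).mpr (by rw [main_atoms d hd]; simpa [atom] using hdm)
    simpa [atom] using h
  exact Subtype.ext (Finset.Subset.antisymm hsub2 hsub1)


/-- For `n ≥ 2`, an automorphism of the associahedron `A_n`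
(an order-preserving bijection of its face poset of dissections) that fixes the
two facets `F_j`, `F_{j+1}` given by the short diagonals `{j-1, j+1}` and
`{j, j+2}` at adjacent vertices `j`, `j+1` of the `(n+3)`-gon is the identity. -/
theorem aut_fixing_two_adjacent_facets (n : ℕ) (hn : 2 ≤ n)
    (γ : {s : Finset (Finset (ZMod (n + 3))) // Dissection (n + 3) s} ≃
      {s : Finset (Finset (ZMod (n + 3))) // Dissection (n + 3) s})
    (hγ : ∀ a b, a.val ⊆ b.val ↔ (γ a).val ⊆ (γ b).val)
    (j : ZMod (n + 3))
    (h1 : ∀ a, a.val = {({j - 1, j + 1} : Finset (ZMod (n + 3)))} → γ a = a)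
    (h2 : ∀ a, a.val = {({j, j + 2} : Finset (ZMod (n + 3)))} → γ a = a) :
    ∀ a, γ a = a := by
  haveI : NeZero (n + 3) := ⟨by omega⟩
  exact main_aux (n + 3) (by omega) γ hγ j h1 h2

end Colorful
end

section
/- In the colorful associahedron A^c_n, the subgroups S_n (recoloring) and D_{n+3} (polygon symmetries) of the automorphism group centralize each other and intersect trivially, so together they generate a subgroup isomorphic to S_n × D_{n+3}. -/
namespace Colorful

/-- The action of a permutation `σ` of the `n` colors on a colored
triangulation: each diagonal of color `c` is recolored with `σ c`. -/
def recolor (n : ℕ) (σ : Equiv.Perm (Fin n))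
    (s : Finset (Finset (ZMod (n + 3)) × Fin n)) :
    Finset (Finset (ZMod (n + 3)) × Fin n) :=
  s.image fun p => (p.1, σ p.2)

/-- A symmetry of the convex `m`-gon acting on vertex labels: a rotation
`x ↦ x + a` or a reflection `x ↦ a - x`. -/
def IsPolySym (m : ℕ) (π : ZMod m → ZMod m) : Prop :=
  ∃ a : ZMod m, (∀ x, π x = x + a) ∨ (∀ x, π x = a - x)

lemma pair_eq {α : Type*} [DecidableEq α] {a b c d : α} (hab : a ≠ b)
    (h : ({a, b} : Finset α) = {c, d}) :
    (a = c ∧ b = d) ∨ (a = d ∧ b = c) := by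
  have ha : a ∈ ({c,d} : Finset α) := h ▸ (by simp)
  have hb : b ∈ ({c,d} : Finset α) := h ▸ (by simp)
  have hc : c ∈ ({a,b} : Finset α) := h ▸ (by simp)
  have hd : d ∈ ({a,b} : Finset α) := h ▸ (by simp)
  simp only [Finset.mem_insert, Finset.mem_singleton] at ha hb hc hd
  rcases ha with rfl|rfl
  · rcases hb with rfl|rfl
    · rcases hd with h'|h' <;> simp_all
    · exact Or.inl ⟨rfl, rfl⟩
  · rcases hb with rfl|rfl
    · exact Or.inr ⟨rfl, rfl⟩
    · rcases hc with h'|h' <;> simp_all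

lemma pair_image {α β : Type*} [DecidableEq α] [DecidableEq β] (f : α → β) (a b : α) :
    ({a, b} : Finset α).image f = {f a, f b} := by
  simp

lemma val_sub_sandwich {m : ℕ} [NeZero m] {u w : ZMod m}
    (h1 : 0 < u.val) (h2 : u.val < w.val) :
    0 < (w - u).val ∧ (w - u).val < w.val := by
  rw [ZMod.val_sub h2.le]; omega

lemma strictArc_add {m : ℕ} {a b c : ZMod m} (t : ZMod m) (h : StrictArc m a b c) :
    StrictArc m (a + t) (b + t) (c + t) := by
  have e1 : c + t - (a + t) = c - a := by ring
  have e2 : b + t - (a + t) = b - a := by ring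
  exact ⟨by rw [e1]; exact h.1, by rw [e1, e2]; exact h.2⟩

lemma strictArc_reflect {m : ℕ} [NeZero m] {a b c : ZMod m} (t : ZMod m)
    (h : StrictArc m a b c) :
    StrictArc m (t - b) (t - a) (t - c) := by
  obtain ⟨h1, h2⟩ := h
  have key := val_sub_sandwich (u := c - a) (w := b - a) h1 h2
  have e0 : b - a - (c - a) = b - c := by ring
  rw [e0] at key
  have e1 : t - c - (t - b) = b - c := by ring
  have e2 : t - a - (t - b) = b - a := by ring
  exact ⟨by rw [e1]; exact key.1, by rw [e1, e2]; exact key.2⟩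

lemma cross_add {m : ℕ} {d e : Finset (ZMod m)} (t : ZMod m) (h : Cross m d e) :
    Cross m (d.image (· + t)) (e.image (· + t)) := by
  obtain ⟨a, b, c, c', rfl, rfl, h1, h2⟩ := h
  exact ⟨a + t, b + t, c + t, c' + t, pair_image _ a b, pair_image _ c c',
    strictArc_add t h1, strictArc_add t h2⟩

lemma cross_reflect {m : ℕ} [NeZero m] {d e : Finset (ZMod m)} (t : ZMod m) (h : Cross m d e) :
    Cross m (d.image (t - ·)) (e.image (t - ·)) := by
  obtain ⟨a, b, c, c', rfl, rfl, h1, h2⟩ := h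
  refine ⟨t - b, t - a, t - c, t - c', ?_, pair_image _ c c',
    strictArc_reflect t h1, strictArc_reflect t h2⟩
  rw [pair_image]
  exact Finset.pair_comm _ _

lemma isDiag_add {m : ℕ} {d : Finset (ZMod m)} (t : ZMod m) (h : IsDiag m d) :
    IsDiag m (d.image (· + t)) := by
  obtain ⟨a, b, rfl, h1, h2, h3⟩ := h
  refine ⟨a + t, b + t, pair_image _ a b, ?_, ?_, ?_⟩
  · simpa using h1
  · intro hc; apply h2; have : a + t = b + 1 + t := by rw [hc]; ring
    simpa using this
  · intro hc; apply h3; have : b + t = a + 1 + t := by rw [hc]; ring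
    simpa using this

lemma isDiag_reflect {m : ℕ} {d : Finset (ZMod m)} (t : ZMod m) (h : IsDiag m d) :
    IsDiag m (d.image (t - ·)) := by
  obtain ⟨a, b, rfl, h1, h2, h3⟩ := h
  refine ⟨t - a, t - b, pair_image _ a b, ?_, ?_, ?_⟩
  · intro hc; exact h1 (by linear_combination -hc)
  · intro hc; exact h3 (by linear_combination hc)
  · intro hc; exact h2 (by linear_combination hc)

lemma cross_disjoint {m : ℕ} {d e : Finset (ZMod m)} (h : Cross m d e) :
    Disjoint d e := by
  obtain ⟨a, b, c, c', rfl, rfl, ⟨p1, p2⟩, ⟨q1, q2⟩⟩ := h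
  have hca : c ≠ a := fun hc => by simp [hc] at p1
  have hcb : c ≠ b := fun hc => by rw [hc] at p2; exact lt_irrefl _ p2
  have hcb' : c' ≠ b := fun hc => by simp [hc] at q1
  have hca' : c' ≠ a := fun hc => by rw [hc] at q2; exact lt_irrefl _ q2
  simp only [Finset.disjoint_insert_left, Finset.disjoint_singleton_left,
    Finset.mem_insert, Finset.mem_singleton]
  tauto

-- ## Dihedral action on vertices

def dpermAux (m : ℕ) : DihedralGroup m → Equiv.Perm (ZMod m)
  | .r i => Equiv.subRight i
  | .sr i => Equiv.subLeft i

def dperm (m : ℕ) : DihedralGroup m →* Equiv.Perm (ZMod m) :=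
  MonoidHom.mk' (dpermAux m) (by
    rintro (i | i) (j | j) <;> ext x <;>
      simp [dpermAux, DihedralGroup.r_mul_r, DihedralGroup.r_mul_sr,
        DihedralGroup.sr_mul_r, DihedralGroup.sr_mul_sr] <;> ring)

lemma dperm_polysym (m : ℕ) (g : DihedralGroup m) : IsPolySym m (dperm m g) := by
  cases g with
  | r i => exact ⟨-i, Or.inl fun x => by simp [dperm, dpermAux, sub_eq_add_neg]⟩
  | sr i => exact ⟨i, Or.inr fun x => by simp [dperm, dpermAux]⟩

lemma isDiag_polysym {m : ℕ} {π : ZMod m → ZMod m} (hπ : IsPolySym m π)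
    {d : Finset (ZMod m)} (h : IsDiag m d) : IsDiag m (d.image π) := by
  obtain ⟨a, ha | ha⟩ := hπ
  · rw [show d.image π = d.image (· + a) from Finset.image_congr fun x _ => ha x]
    exact isDiag_add a h
  · rw [show d.image π = d.image (a - ·) from Finset.image_congr fun x _ => ha x]
    exact isDiag_reflect a h

lemma cross_polysym {m : ℕ} [NeZero m] {π : ZMod m → ZMod m} (hπ : IsPolySym m π)
    {d e : Finset (ZMod m)} (h : Cross m d e) : Cross m (d.image π) (e.image π) := by
  obtain ⟨a, ha | ha⟩ := hπ
  · rw [show d.image π = d.image (· + a) from Finset.image_congr fun x _ => ha x,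
      show e.image π = e.image (· + a) from Finset.image_congr fun x _ => ha x]
    exact cross_add a h
  · rw [show d.image π = d.image (a - ·) from Finset.image_congr fun x _ => ha x,
      show e.image π = e.image (a - ·) from Finset.image_congr fun x _ => ha x]
    exact cross_reflect a h

lemma dimage_dimage {m : ℕ} (g h : DihedralGroup m) (d : Finset (ZMod m)) :
    (d.image (dperm m h)).image (dperm m g) = d.image (dperm m (g * h)) := by
  rw [Finset.image_image, map_mul]
  rfl

lemma dimage_inv {m : ℕ} (g : DihedralGroup m) (d : Finset (ZMod m)) :
    (d.image (dperm m g)).image (dperm m g⁻¹) = d := by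
  rw [dimage_dimage, inv_mul_cancel, map_one]
  simp

lemma isTriangulation_dperm {m : ℕ} [NeZero m] (g : DihedralGroup m)
    {s : Finset (Finset (ZMod m))} (h : IsTriangulation m s) :
    IsTriangulation m (s.image fun d => d.image (dperm m g)) := by
  obtain ⟨hd, hnc, hcard⟩ := h
  refine ⟨?_, ?_, ?_⟩
  · rintro d hd'
    obtain ⟨d₀, hd₀, rfl⟩ := Finset.mem_image.mp hd'
    exact isDiag_polysym (dperm_polysym m g) (hd d₀ hd₀)
  · rintro d hd' e he' hne hc
    obtain ⟨d₀, hd₀, rfl⟩ := Finset.mem_image.mp hd'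
    obtain ⟨e₀, he₀, rfl⟩ := Finset.mem_image.mp he'
    have hne₀ : d₀ ≠ e₀ := fun h => hne (by rw [h])
    have := cross_polysym (dperm_polysym m g⁻¹) hc
    rw [dimage_inv, dimage_inv] at this
    exact hnc d₀ hd₀ e₀ he₀ hne₀ this
  · rw [Finset.card_image_of_injective _ (Finset.image_injective (dperm m g).injective)]
    exact hcard

-- ## Colored triangulations and the two actions

def dact (n : ℕ) (g : DihedralGroup (n + 3))
    (s : Finset (Finset (ZMod (n + 3)) × Fin n)) :
    Finset (Finset (ZMod (n + 3)) × Fin n) :=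
  s.image fun p => (p.1.image (dperm (n + 3) g), p.2)

lemma recolor_inj (n : ℕ) (σ : Equiv.Perm (Fin n)) :
    Function.Injective fun p : Finset (ZMod (n + 3)) × Fin n => (p.1, σ p.2) := by
  rintro ⟨d, c⟩ ⟨d', c'⟩ h
  simp only [Prod.mk.injEq] at h
  exact Prod.ext h.1 (σ.injective h.2)

lemma dact_inj (n : ℕ) (g : DihedralGroup (n + 3)) :
    Function.Injective fun p : Finset (ZMod (n + 3)) × Fin n =>
      (p.1.image (dperm (n + 3) g), p.2) := by
  rintro ⟨d, c⟩ ⟨d', c'⟩ h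
  simp only [Prod.mk.injEq] at h
  exact Prod.ext (Finset.image_injective (dperm (n + 3) g).injective h.1) h.2

lemma recolor_fst (n : ℕ) (σ : Equiv.Perm (Fin n)) (s) :
    (recolor n σ s).image Prod.fst = s.image Prod.fst := by
  rw [recolor, Finset.image_image]; rfl

lemma dact_fst (n : ℕ) (g : DihedralGroup (n + 3)) (s) :
    (dact n g s).image Prod.fst = (s.image Prod.fst).image fun d => d.image (dperm (n + 3) g) := by
  rw [dact, Finset.image_image, Finset.image_image]; rfl

lemma ctri_recolor (n : ℕ) (σ : Equiv.Perm (Fin n)) {s} (h : CTri n s) :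
    CTri n (recolor n σ s) := by
  obtain ⟨ht, h1, h2⟩ := h
  have hcard : (recolor n σ s).card = s.card :=
    Finset.card_image_of_injective _ (recolor_inj n σ)
  refine ⟨by rw [recolor_fst]; exact ht, by rw [recolor_fst, hcard]; exact h1, ?_⟩
  have : (recolor n σ s).image Prod.snd = (s.image Prod.snd).image σ := by
    rw [recolor, Finset.image_image, Finset.image_image]; rfl
  rw [this, Finset.card_image_of_injective _ σ.injective, hcard]
  exact h2

lemma ctri_dact (n : ℕ) (g : DihedralGroup (n + 3)) {s} (h : CTri n s) :
    CTri n (dact n g s) := by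
  obtain ⟨ht, h1, h2⟩ := h
  have hcard : (dact n g s).card = s.card :=
    Finset.card_image_of_injective _ (dact_inj n g)
  refine ⟨by rw [dact_fst]; exact isTriangulation_dperm g ht, ?_, ?_⟩
  · rw [dact_fst, Finset.card_image_of_injective _
      (Finset.image_injective (dperm (n + 3) g).injective), hcard]
    exact h1
  · have : (dact n g s).image Prod.snd = s.image Prod.snd := by
      rw [dact, Finset.image_image]; rfl
    rw [this, hcard]; exact h2

lemma recolor_recolor (n : ℕ) (σ τ : Equiv.Perm (Fin n)) (s) :
    recolor n σ (recolor n τ s) = recolor n (σ * τ) s := by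
  simp only [recolor, Finset.image_image]; rfl

lemma recolor_one (n : ℕ) (s) : recolor n 1 s = s := by
  simp [recolor]

lemma dact_dact (n : ℕ) (g h : DihedralGroup (n + 3)) (s) :
    dact n g (dact n h s) = dact n (g * h) s := by
  simp only [dact, Finset.image_image]
  apply Finset.image_congr
  rintro ⟨d, c⟩ _
  exact Prod.ext (dimage_dimage g h d) rfl

lemma dact_one (n : ℕ) (s) : dact n 1 s = s := by
  have : ∀ p : Finset (ZMod (n + 3)) × Fin n,
      (p.1.image (dperm (n + 3) 1), p.2) = p := by
    rintro ⟨d, c⟩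
    simp [map_one]
  simp only [dact, map_one]
  simp

def ΦAux (n : ℕ) (σ : Equiv.Perm (Fin n)) : Equiv.Perm {s // CTri n s} where
  toFun s := ⟨recolor n σ s.1, ctri_recolor n σ s.2⟩
  invFun s := ⟨recolor n σ⁻¹ s.1, ctri_recolor n σ⁻¹ s.2⟩
  left_inv s := Subtype.ext (by
    show recolor n σ⁻¹ (recolor n σ s.1) = s.1
    rw [recolor_recolor, inv_mul_cancel, recolor_one])
  right_inv s := Subtype.ext (by
    show recolor n σ (recolor n σ⁻¹ s.1) = s.1
    rw [recolor_recolor, mul_inv_cancel, recolor_one])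

def Φdef (n : ℕ) : Equiv.Perm (Fin n) →* Equiv.Perm {s // CTri n s} :=
  MonoidHom.mk' (ΦAux n) (by
    intro σ τ
    apply Equiv.ext
    intro s
    apply Subtype.ext
    exact (recolor_recolor n σ τ s.1).symm)

def ΨAux (n : ℕ) (g : DihedralGroup (n + 3)) : Equiv.Perm {s // CTri n s} where
  toFun s := ⟨dact n g s.1, ctri_dact n g s.2⟩
  invFun s := ⟨dact n g⁻¹ s.1, ctri_dact n g⁻¹ s.2⟩
  left_inv s := Subtype.ext (by
    show dact n g⁻¹ (dact n g s.1) = s.1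
    rw [dact_dact, inv_mul_cancel, dact_one])
  right_inv s := Subtype.ext (by
    show dact n g (dact n g⁻¹ s.1) = s.1
    rw [dact_dact, mul_inv_cancel, dact_one])

def Ψdef (n : ℕ) : DihedralGroup (n + 3) →* Equiv.Perm {s // CTri n s} :=
  MonoidHom.mk' (ΨAux n) (by
    intro g h
    apply Equiv.ext
    intro s
    apply Subtype.ext
    exact (dact_dact n g h s.1).symm)

lemma Φ_apply (n : ℕ) (σ) (s) : ((Φdef n σ) s).val = recolor n σ s.val := rfl
lemma Ψ_apply (n : ℕ) (g) (s) : ((Ψdef n g) s).val = dact n g s.val := rfl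

lemma ΦΨ_commute (n : ℕ) (σ : Equiv.Perm (Fin n)) (g : DihedralGroup (n + 3)) :
    Commute (Φdef n σ) (Ψdef n g) := by
  apply Equiv.ext
  intro s
  apply Subtype.ext
  show recolor n σ (dact n g s.1) = dact n g (recolor n σ s.1)
  simp only [recolor, dact, Finset.image_image]
  rfl

-- ## The fan triangulations

def K (n : ℕ) (i : Fin n) : ZMod (n + 3) := (((i : ℕ) + 2 : ℕ) : ZMod (n + 3))

lemma cast_eq_iff (n : ℕ) {a b : ℕ} (ha : a < n + 3) (hb : b < n + 3) :
    ((a : ZMod (n + 3)) = (b : ZMod (n + 3))) ↔ a = b := by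
  constructor
  · intro h
    have := congrArg ZMod.val h
    rwa [ZMod.val_natCast, ZMod.val_natCast, Nat.mod_eq_of_lt ha, Nat.mod_eq_of_lt hb] at this
  · rintro rfl; rfl

lemma K_ne_zero (n : ℕ) (i : Fin n) : K n i ≠ 0 := by
  have := (cast_eq_iff n (a := (i : ℕ) + 2) (b := 0) (by omega) (by omega)).not.mpr (by omega)
  simpa [K] using this

lemma K_ne_one (n : ℕ) (i : Fin n) : K n i ≠ 1 := by
  have := (cast_eq_iff n (a := (i : ℕ) + 2) (b := 1) (by omega) (by omega)).not.mpr (by omega)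
  simpa [K] using this

lemma K_succ_ne_zero (n : ℕ) (i : Fin n) : K n i + 1 ≠ 0 := by
  have h1 : K n i + 1 = (((i : ℕ) + 3 : ℕ) : ZMod (n + 3)) := by
    simp only [K]
    push_cast
    ring
  rw [h1]
  have := (cast_eq_iff n (a := (i : ℕ) + 3) (b := 0) (by omega) (by omega)).not.mpr (by omega)
  simpa using this

lemma K_inj (n : ℕ) {i j : Fin n} (h : K n i = K n j) : i = j := by
  have := (cast_eq_iff n (a := (i : ℕ) + 2) (b := (j : ℕ) + 2)
      (by omega) (by omega)).mp h
  exact Fin.ext (by omega)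

def fan (n : ℕ) (v : ZMod (n + 3)) : Finset (Finset (ZMod (n + 3)) × Fin n) :=
  Finset.univ.image fun i : Fin n => (({v, v + K n i} : Finset (ZMod (n + 3))), i)

lemma v_ne (n : ℕ) (v : ZMod (n + 3)) (i : Fin n) : v ≠ v + K n i := by
  intro h
  exact K_ne_zero n i (by linear_combination -h)

lemma mem_fan (n : ℕ) (v : ZMod (n + 3)) (d : Finset (ZMod (n + 3))) (c : Fin n) :
    (d, c) ∈ fan n v ↔ d = {v, v + K n c} := by
  constructor
  · intro h
    obtain ⟨i, -, hi⟩ := Finset.mem_image.mp h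
    obtain ⟨h1, h2⟩ := Prod.mk.injEq .. ▸ hi
    subst h2
    exact h1.symm
  · rintro rfl
    exact Finset.mem_image.mpr ⟨c, Finset.mem_univ c, rfl⟩

lemma fan_fst (n : ℕ) (v : ZMod (n + 3)) :
    (fan n v).image Prod.fst =
      Finset.univ.image fun i : Fin n => ({v, v + K n i} : Finset (ZMod (n + 3))) := by
  rw [fan, Finset.image_image]; rfl

lemma fanDiag_inj (n : ℕ) (v : ZMod (n + 3)) :
    Function.Injective fun i : Fin n => ({v, v + K n i} : Finset (ZMod (n + 3))) := by
  intro i j h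
  rcases pair_eq (v_ne n v i) h with ⟨-, h2⟩ | ⟨h1, h2⟩
  · exact K_inj n (by linear_combination h2)
  · exact absurd (by linear_combination -h1 : K n j = 0) (K_ne_zero n j)

lemma fan_card (n : ℕ) (v : ZMod (n + 3)) : (fan n v).card = n := by
  rw [fan, Finset.card_image_of_injective _ (fun i j h => congrArg Prod.snd h),
    Finset.card_univ, Fintype.card_fin]

lemma fan_ctri (n : ℕ) (v : ZMod (n + 3)) : CTri n (fan n v) := by
  refine ⟨⟨?_, ?_, ?_⟩, ?_, ?_⟩
  · intro d hd
    rw [fan_fst] at hd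
    obtain ⟨i, -, rfl⟩ := Finset.mem_image.mp hd
    exact ⟨v, v + K n i, rfl, v_ne n v i,
      fun h => K_succ_ne_zero n i (by linear_combination -h),
      fun h => K_ne_one n i (by linear_combination h)⟩
  · intro d hd e he hne hc
    rw [fan_fst] at hd he
    obtain ⟨i, -, rfl⟩ := Finset.mem_image.mp hd
    obtain ⟨j, -, rfl⟩ := Finset.mem_image.mp he
    have hv1 : v ∈ ({v, v + K n i} : Finset (ZMod (n + 3))) := by simp
    have hv2 : v ∈ ({v, v + K n j} : Finset (ZMod (n + 3))) := by simp
    exact Finset.disjoint_left.mp (cross_disjoint hc) hv1 hv2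
  · rw [fan_fst, Finset.card_image_of_injective _ (fanDiag_inj n v),
      Finset.card_univ, Fintype.card_fin]
    omega
  · rw [fan_fst, Finset.card_image_of_injective _ (fanDiag_inj n v), fan_card,
      Finset.card_univ, Fintype.card_fin]
  · have : (fan n v).image Prod.snd = Finset.univ := by
      ext c
      simp [fan]
    rw [this, fan_card, Finset.card_univ, Fintype.card_fin]

-- ## Injectivity lemmas

lemma dperm_r (m : ℕ) (t x : ZMod m) : dperm m (.r t) x = x - t := rfl
lemma dperm_sr (m : ℕ) (t x : ZMod m) : dperm m (.sr t) x = t - x := rfl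

lemma Φ_injective (n : ℕ) (hn : 2 ≤ n) : Function.Injective (Φdef n) := by
  rw [injective_iff_map_eq_one]
  intro σ hσ
  apply Equiv.ext
  intro i
  have hval : (Φdef n σ) ⟨fan n 0, fan_ctri n 0⟩ = ⟨fan n 0, fan_ctri n 0⟩ := by
    rw [hσ]; rfl
  have hs : recolor n σ (fan n 0) = fan n 0 := congrArg Subtype.val hval
  have hm : (({0, 0 + K n i} : Finset (ZMod (n + 3))), i) ∈ fan n 0 :=
    (mem_fan n 0 _ i).mpr rfl
  have hm2 : (({0, 0 + K n i} : Finset (ZMod (n + 3))), σ i) ∈ recolor n σ (fan n 0) :=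
    Finset.mem_image.mpr ⟨_, hm, rfl⟩
  rw [hs, mem_fan] at hm2
  exact (fanDiag_inj n 0 hm2).symm

lemma dact_fan_fix {n : ℕ} {g : DihedralGroup (n + 3)} {v : ZMod (n + 3)}
    (h : dact n g (fan n v) = fan n v) (i : Fin n) :
    ({dperm (n + 3) g v, dperm (n + 3) g (v + K n i)} : Finset (ZMod (n + 3)))
      = {v, v + K n i} := by
  have hm : (({v, v + K n i} : Finset (ZMod (n + 3))), i) ∈ fan n v :=
    (mem_fan n v _ i).mpr rfl
  have hm2 : (({v, v + K n i} : Finset (ZMod (n + 3))).image (dperm (n + 3) g), i)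
      ∈ dact n g (fan n v) := Finset.mem_image.mpr ⟨_, hm, rfl⟩
  rw [h, mem_fan] at hm2
  rw [pair_image] at hm2
  exact hm2

lemma K_zero (n : ℕ) (hn : 2 ≤ n) : K n ⟨0, by omega⟩ = 2 := by
  simp [K]

lemma K_one (n : ℕ) (hn : 2 ≤ n) : K n ⟨1, by omega⟩ = 3 := by
  simp [K]

lemma two_ne_zero' (n : ℕ) (hn : 2 ≤ n) : (2 : ZMod (n + 3)) ≠ 0 := by
  have := (cast_eq_iff n (a := 2) (b := 0) (by omega) (by omega)).not.mpr (by omega)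
  simpa using this

lemma four_ne_zero' (n : ℕ) (hn : 2 ≤ n) : (4 : ZMod (n + 3)) ≠ 0 := by
  have := (cast_eq_iff n (a := 4) (b := 0) (by omega) (by omega)).not.mpr (by omega)
  simpa using this

lemma two_ne_three' (n : ℕ) (hn : 2 ≤ n) : (2 : ZMod (n + 3)) ≠ 3 := by
  have := (cast_eq_iff n (a := 2) (b := 3) (by omega) (by omega)).not.mpr (by omega)
  simpa using this

lemma Ψ_injective (n : ℕ) (hn : 2 ≤ n) : Function.Injective (Ψdef n) := by
  rw [injective_iff_map_eq_one]
  intro g hg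
  have hfix : ∀ (v : ZMod (n + 3)) (i : Fin n),
      ({dperm (n + 3) g v, dperm (n + 3) g (v + K n i)} : Finset (ZMod (n + 3)))
        = {v, v + K n i} := by
    intro v i
    apply dact_fan_fix (v := v) _ i
    have hval : (Ψdef n g) ⟨fan n v, fan_ctri n v⟩ = ⟨fan n v, fan_ctri n v⟩ := by
      rw [hg]; rfl
    exact congrArg Subtype.val hval
  set i0 : Fin n := ⟨0, by omega⟩ with hi0
  have hK0 : K n i0 = 2 := K_zero n hn
  cases g with
  | r t =>
    have h2 := hfix 0 i0
    rw [dperm_r, dperm_r] at h2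
    have hab : (0 : ZMod (n + 3)) - t ≠ 0 + K n i0 - t := by
      intro h
      exact v_ne n 0 i0 (by linear_combination h)
    rcases pair_eq hab h2 with ⟨h1, -⟩ | ⟨h1, h3⟩
    · rw [DihedralGroup.one_def]
      congr 1
      linear_combination -h1
    · exfalso
      apply four_ne_zero' n hn
      have : K n i0 + K n i0 = 0 := by linear_combination h3 - h1
      rw [hK0] at this
      linear_combination this
  | sr t =>
    exfalso
    have h2 := hfix 0 i0
    have h3 := hfix 1 i0
    rw [dperm_sr, dperm_sr] at h2 h3
    have hab2 : t - (0 : ZMod (n + 3)) ≠ t - (0 + K n i0) := by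
      intro h
      exact v_ne n 0 i0 (by linear_combination -h)
    have hab3 : t - (1 : ZMod (n + 3)) ≠ t - (1 + K n i0) := by
      intro h
      exact v_ne n 1 i0 (by linear_combination -h)
    have ht2 : t = 2 := by
      rcases pair_eq hab2 h2 with ⟨h1, h4⟩ | ⟨h1, -⟩
      · exfalso
        apply four_ne_zero' n hn
        have : K n i0 + K n i0 = 0 := by linear_combination h1 - h4
        rw [hK0] at this
        linear_combination this
      · rw [hK0] at h1
        linear_combination h1
    have ht4 : t = 4 := by
      rcases pair_eq hab3 h3 with ⟨h1, h4⟩ | ⟨h1, h4⟩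
      · exfalso
        apply four_ne_zero' n hn
        have : K n i0 + K n i0 = 0 := by linear_combination h1 - h4
        rw [hK0] at this
        linear_combination this
      · rw [hK0] at h4
        linear_combination h4
    apply two_ne_zero' n hn
    linear_combination ht2 - ht4

-- ## Trivial intersection

lemma inter_eq_one (n : ℕ) (hn : 2 ≤ n) (σ : Equiv.Perm (Fin n))
    (g : DihedralGroup (n + 3)) (h : Φdef n σ = Ψdef n g) : Ψdef n g = 1 := by
  have hD : ∀ (v : ZMod (n + 3)) (i : Fin n), ∃ j : Fin n,
      ({dperm (n + 3) g v, dperm (n + 3) g (v + K n i)} : Finset (ZMod (n + 3)))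
        = {v, v + K n j} := by
    intro v i
    have hval : recolor n σ (fan n v) = dact n g (fan n v) :=
      congrArg Subtype.val
        (by rw [h] : (Φdef n σ) ⟨fan n v, fan_ctri n v⟩ = (Ψdef n g) ⟨fan n v, fan_ctri n v⟩)
    have hfst : ((fan n v).image Prod.fst).image (fun d => d.image (dperm (n + 3) g))
        = (fan n v).image Prod.fst := by
      rw [← dact_fst, ← hval, recolor_fst]
    have hm : ({v, v + K n i} : Finset (ZMod (n + 3))) ∈ (fan n v).image Prod.fst := by
      rw [fan_fst]
      exact Finset.mem_image.mpr ⟨i, Finset.mem_univ i, rfl⟩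
    have hm2 : ({v, v + K n i} : Finset (ZMod (n + 3))).image (dperm (n + 3) g)
        ∈ ((fan n v).image Prod.fst).image (fun d => d.image (dperm (n + 3) g)) :=
      Finset.mem_image.mpr ⟨_, hm, rfl⟩
    rw [hfst, fan_fst] at hm2
    obtain ⟨j, -, hj⟩ := Finset.mem_image.mp hm2
    exact ⟨j, (hj.trans (pair_image _ _ _)).symm⟩
  set i0 : Fin n := ⟨0, by omega⟩ with hi0def
  set i1 : Fin n := ⟨1, by omega⟩ with hi1def
  have hK0 : K n i0 = 2 := K_zero n hn
  have hK1 : K n i1 = 3 := K_one n hn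
  cases g with
  | r t =>
    have ht0 : t = 0 := by
      obtain ⟨j, hj⟩ := hD 0 i0
      rw [dperm_r, dperm_r] at hj
      have hab : (0 : ZMod (n + 3)) - t ≠ 0 + K n i0 - t := fun h' =>
        v_ne n 0 i0 (by linear_combination h')
      rcases pair_eq hab hj with ⟨h1, -⟩ | ⟨-, h4⟩
      · linear_combination -h1
      · -- t = K n i0 = 2; now use i1 to derive a contradiction
        exfalso
        have ht2 : t = 2 := by rw [hK0] at h4; linear_combination -h4
        obtain ⟨j', hj'⟩ := hD 0 i1
        rw [dperm_r, dperm_r] at hj'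
        have hab' : (0 : ZMod (n + 3)) - t ≠ 0 + K n i1 - t := fun h' =>
          v_ne n 0 i1 (by linear_combination h')
        rcases pair_eq hab' hj' with ⟨h1', -⟩ | ⟨-, h4'⟩
        · exact two_ne_zero' n hn (by linear_combination -ht2 - h1')
        · rw [hK1] at h4'
          exact two_ne_three' n hn (by linear_combination -h4' - ht2)
    rw [ht0, ← DihedralGroup.one_def, map_one]
  | sr t =>
    exfalso
    have h02 : t = 0 ∨ t = 2 := by
      obtain ⟨j, hj⟩ := hD 0 i0
      rw [dperm_sr, dperm_sr] at hj
      have hab : t - (0 : ZMod (n + 3)) ≠ t - (0 + K n i0) := fun h' =>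
        v_ne n 0 i0 (by linear_combination -h')
      rcases pair_eq hab hj with ⟨h1, -⟩ | ⟨-, h4⟩
      · exact Or.inl (by linear_combination h1)
      · rw [hK0] at h4
        exact Or.inr (by linear_combination h4)
    have h03 : t = 0 ∨ t = 3 := by
      obtain ⟨j, hj⟩ := hD 0 i1
      rw [dperm_sr, dperm_sr] at hj
      have hab : t - (0 : ZMod (n + 3)) ≠ t - (0 + K n i1) := fun h' =>
        v_ne n 0 i1 (by linear_combination -h')
      rcases pair_eq hab hj with ⟨h1, -⟩ | ⟨-, h4⟩
      · exact Or.inl (by linear_combination h1)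
      · rw [hK1] at h4
        exact Or.inr (by linear_combination h4)
    have h24 : t = 2 ∨ t = 4 := by
      obtain ⟨j, hj⟩ := hD 1 i0
      rw [dperm_sr, dperm_sr] at hj
      have hab : t - (1 : ZMod (n + 3)) ≠ t - (1 + K n i0) := fun h' =>
        v_ne n 1 i0 (by linear_combination -h')
      rcases pair_eq hab hj with ⟨h1, -⟩ | ⟨-, h4⟩
      · exact Or.inl (by linear_combination h1)
      · rw [hK0] at h4
        exact Or.inr (by linear_combination h4)
    have ht0 : t = 0 := by
      rcases h02 with rfl | ht2
      · rfl
      · rcases h03 with ht0 | ht3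
        · exact absurd (by linear_combination ht0 - ht2 : (2 : ZMod (n + 3)) = 0)
            (two_ne_zero' n hn)
        · exact absurd (by linear_combination ht3 - ht2 : (2 : ZMod (n + 3)) = 3)
            (two_ne_three' n hn)
    rcases h24 with ht2 | ht4
    · exact two_ne_zero' n hn (by linear_combination ht0 - ht2)
    · exact four_ne_zero' n hn (by linear_combination ht0 - ht4)


/-- In the automorphism group of the colorful associahedron
(permutations of the vertices of `G^c_n`), the recoloring copy of `S_n` and the
copy of `D_{n+3}` coming from the polygon symmetries (acting on labels, keeping
colors) centralize each other and intersect trivially, so together they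
generate a subgroup isomorphic to `S_n × D_{n+3}`. -/
theorem sn_and_dihedral_commute (n : ℕ) (hn : 2 ≤ n) :
    ∃ (Φ : Equiv.Perm (Fin n) →* Equiv.Perm {s // CTri n s})
      (Ψ : DihedralGroup (n + 3) →* Equiv.Perm {s // CTri n s}),
      Function.Injective Φ ∧ Function.Injective Ψ ∧
      (∀ σ s, ((Φ σ) s).val = recolor n σ s.val) ∧
      (∀ g, ∃ π : ZMod (n + 3) → ZMod (n + 3), IsPolySym (n + 3) π ∧
        ∀ s, ((Ψ g) s).val = s.val.image fun p => (p.1.image π, p.2)) ∧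
      (∀ σ g, Commute (Φ σ) (Ψ g)) ∧
      Φ.range ⊓ Ψ.range = ⊥ ∧
      Nonempty ((↥(Φ.range ⊔ Ψ.range)) ≃*
        Equiv.Perm (Fin n) × DihedralGroup (n + 3)) := by
  refine ⟨Φdef n, Ψdef n, Φ_injective n hn, Ψ_injective n hn, fun σ s => rfl,
    fun g => ⟨dperm (n + 3) g, dperm_polysym (n + 3) g, fun s => rfl⟩,
    ΦΨ_commute n, ?_, ?_⟩
  · apply le_antisymm _ bot_le
    intro x hx
    rw [Subgroup.mem_inf] at hx
    obtain ⟨⟨σ, hσ⟩, ⟨g, hg⟩⟩ := hx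
    have h1 := inter_eq_one n hn σ g (hσ.trans hg.symm)
    rw [Subgroup.mem_bot, ← hg, h1]
  · set F := (Φdef n).noncommCoprod (Ψdef n) (fun σ g => ΦΨ_commute n σ g) with hF
    have hFinj : Function.Injective F := by
      rw [injective_iff_map_eq_one]
      rintro ⟨σ, g⟩ h1
      have h2 : Φdef n σ * Ψdef n g = 1 := h1
      have h3 : Φdef n σ = Ψdef n g⁻¹ := by
        rw [map_inv]
        exact mul_eq_one_iff_eq_inv.mp h2
      have h4 : Ψdef n g⁻¹ = 1 := inter_eq_one n hn σ g⁻¹ h3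
      have hg : g = 1 := inv_eq_one.mp (Ψ_injective n hn (h4.trans (map_one (Ψdef n)).symm))
      have hσ : σ = 1 := Φ_injective n hn (by
        rw [h3, h4, map_one])
      exact Prod.ext hσ hg
    have hrange : F.range = (Φdef n).range ⊔ (Ψdef n).range := by
      apply le_antisymm
      · rintro x ⟨⟨σ, g⟩, rfl⟩
        exact Subgroup.mul_mem _ (Subgroup.mem_sup_left ⟨σ, rfl⟩)
          (Subgroup.mem_sup_right ⟨g, rfl⟩)
      · apply sup_le
        · rintro x ⟨σ, rfl⟩
          exact ⟨(σ, 1), by simp [hF, MonoidHom.noncommCoprod_apply]⟩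
        · rintro x ⟨g, rfl⟩
          exact ⟨(1, g), by simp [hF, MonoidHom.noncommCoprod_apply]⟩
    exact ⟨(MulEquiv.subgroupCongr hrange.symm).trans (MonoidHom.ofInjective hFinj).symm⟩


end Colorful
end
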